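/- arXiv:1812.11054 — 8 statements merged into one kernel-verified Lean document; each statement's English description precedes it below -/
import Mathlib

section
/- If G is a minimally rigid graph (in the Laman sense, i.e., |E(G)| = 2|V(G)| - 3 and every vertex subset X with 2 ≤ |X| ≤ |V(G)| satisfies |E[X]| ≤ 2|X| - 3), and G₁ is obtained from G by adding a new vertex v together with exactly two edges joining v to two distinct existing vertices of G, then G₁ is also minimally rigid. -/
/-- A finite simple graph given by an explicit vertex `Finset` and edge `Finset`. -/
structure FinGraph where
  verts : Finset ℕ
  edges : Finset (Sym2 ℕ)
  loopless : ∀ e ∈ edges, ¬ e.IsDiag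
  edge_mem : ∀ e ∈ edges, ∀ x ∈ e, x ∈ verts

/-- `E[X]`: the edges of `G` with both endpoints in `X`. -/
def FinGraph.inducedEdges (G : FinGraph) (X : Finset ℕ) : Finset (Sym2 ℕ) :=
  G.edges ∩ X.sym2

/-- Minimally rigid (Laman) graph. -/
def FinGraph.Laman (G : FinGraph) : Prop :=
  ((G.edges.card : ℤ) = 2 * G.verts.card - 3) ∧
  ∀ X ⊆ G.verts, 2 ≤ X.card →
    ((G.inducedEdges X).card : ℤ) ≤ 2 * X.card - 3

/-- An extension operation: add a new vertex `v` joined by exactly two edges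
to two distinct existing vertices. -/
def FinGraph.IsExtension (G G₁ : FinGraph) : Prop :=
  ∃ v r₁ r₂, v ∉ G.verts ∧ r₁ ∈ G.verts ∧ r₂ ∈ G.verts ∧ r₁ ≠ r₂ ∧
    G₁.verts = insert v G.verts ∧
    G₁.edges = insert s(v, r₁) (insert s(v, r₂) G.edges)

/-- `G` is a complete graph on two vertices. -/
def FinGraph.IsK2 (G : FinGraph) : Prop :=
  ∃ a b, a ≠ b ∧ G.verts = {a, b} ∧ G.edges = {s(a, b)}

/-- a single extension of a minimally rigid graph is minimally rigid. -/
theorem extension_preserves_laman (G G₁ : FinGraph)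
    (hG : G.Laman) (hext : G.IsExtension G₁) : G₁.Laman := by
  obtain ⟨v, r₁, r₂, hv, hr₁, hr₂, hrr, hverts, hedges⟩ := hext
  have hvedge : ∀ e ∈ G.edges, v ∉ e := fun e he hve => hv (G.edge_mem e he v hve)
  have he1 : s(v, r₁) ∉ G.edges := fun h => hvedge _ h (by simp)
  have he2 : s(v, r₂) ∉ G.edges := fun h => hvedge _ h (by simp)
  have hvr2 : v ≠ r₂ := fun h => hv (h ▸ hr₂)
  have hne : s(v, r₁) ≠ s(v, r₂) := fun h => hrr (Sym2.congr_right.mp h)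
  have hvcard : G₁.verts.card = G.verts.card + 1 := by
    rw [hverts, Finset.card_insert_of_notMem hv]
  have hecard : G₁.edges.card = G.edges.card + 2 := by
    rw [hedges, Finset.card_insert_of_notMem (by simp [hne, he1]),
      Finset.card_insert_of_notMem he2]
  constructor
  · rw [hvcard, hecard]
    push_cast
    linarith [hG.1]
  · intro X hX hX2
    by_cases hvX : v ∈ X
    · -- v ∈ X
      set Y := X.erase v with hY
      have hXY : X = insert v Y := (Finset.insert_erase hvX).symm
      have hvY : v ∉ Y := Finset.notMem_erase v X
      have hYsub : Y ⊆ G.verts := by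
        intro x hx
        have hx' := hX (Finset.mem_of_mem_erase hx)
        rw [hverts, Finset.mem_insert] at hx'
        exact hx'.resolve_left (Finset.ne_of_mem_erase hx)
      have hXcard : X.card = Y.card + 1 := by
        rw [hXY, Finset.card_insert_of_notMem hvY]
      -- edges of G in X.sym2 lie in Y.sym2
      have hGsub : G.edges ∩ X.sym2 ⊆ G.inducedEdges Y := by
        intro e he
        rw [Finset.mem_inter] at he
        refine Finset.mem_inter.mpr ⟨he.1, ?_⟩
        rw [Finset.mem_sym2_iff] at he ⊢
        intro y hy
        exact Finset.mem_erase.mpr ⟨fun h => hvedge e he.1 (h ▸ hy), he.2 y hy⟩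
      by_cases hY2 : 2 ≤ Y.card
      · have hsub : G₁.inducedEdges X ⊆
            insert s(v, r₁) (insert s(v, r₂) (G.inducedEdges Y)) := by
          intro e he
          rw [FinGraph.inducedEdges, hedges, Finset.mem_inter, Finset.mem_insert,
            Finset.mem_insert] at he
          rcases he.1 with h | h | h
          · exact Finset.mem_insert.mpr (Or.inl h)
          · exact Finset.mem_insert.mpr (Or.inr (Finset.mem_insert.mpr (Or.inl h)))
          · exact Finset.mem_insert.mpr (Or.inr (Finset.mem_insert.mpr
              (Or.inr (hGsub (Finset.mem_inter.mpr ⟨h, he.2⟩)))))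
        have hle : (G₁.inducedEdges X).card ≤ (G.inducedEdges Y).card + 2 := by
          calc (G₁.inducedEdges X).card
              ≤ (insert s(v, r₁) (insert s(v, r₂) (G.inducedEdges Y))).card :=
                Finset.card_le_card hsub
            _ ≤ (insert s(v, r₂) (G.inducedEdges Y)).card + 1 := Finset.card_insert_le _ _
            _ ≤ (G.inducedEdges Y).card + 2 := by
                have := Finset.card_insert_le s(v, r₂) (G.inducedEdges Y)
                omega
        have hbound := hG.2 Y hYsub hY2
        rw [hXcard]
        push_cast at *
        linarith
      · -- |Y| ≤ 1, so |X| = 2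
        have hY1 : Y.card = 1 := by omega
        obtain ⟨u, hu⟩ := Finset.card_eq_one.mp hY1
        have hvu : v ≠ u := fun h => hvY (h ▸ hu ▸ Finset.mem_singleton_self u)
        have hsub : G₁.inducedEdges X ⊆ {s(v, u)} := by
          intro e he
          rw [FinGraph.inducedEdges, Finset.mem_inter] at he
          have hnd := G₁.loopless e he.1
          have hmem := he.2
          rw [hXY, hu] at hmem
          induction e using Sym2.ind with
          | _ a b =>
            rw [Finset.mk_mem_sym2_iff] at hmem
            simp only [Finset.mem_insert, Finset.mem_singleton] at hmem
            rw [Sym2.isDiag_iff_proj_eq] at hnd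
            rw [Finset.mem_singleton, Sym2.eq_iff]
            rcases hmem.1 with ha | ha <;> rcases hmem.2 with hb | hb
            · exact absurd (ha.trans hb.symm) hnd
            · exact Or.inl ⟨ha, hb⟩
            · exact Or.inr ⟨ha, hb⟩
            · exact absurd (ha.trans hb.symm) hnd
        have hle : (G₁.inducedEdges X).card ≤ 1 :=
          le_trans (Finset.card_le_card hsub) (by simp)
        have hX2' : X.card = 2 := by omega
        rw [hX2']
        push_cast
        linarith
    · -- v ∉ X
      have hXsub : X ⊆ G.verts := by
        intro x hx
        have hx' := hX hx
        rw [hverts, Finset.mem_insert] at hx'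
        exact hx'.resolve_left (fun h => hvX (h ▸ hx))
      have heq : G₁.inducedEdges X = G.inducedEdges X := by
        unfold FinGraph.inducedEdges
        rw [hedges]
        ext e
        simp only [Finset.mem_inter, Finset.mem_insert]
        constructor
        · rintro ⟨h1 | h1 | h1, h2⟩
          · exfalso
            rw [Finset.mem_sym2_iff] at h2
            exact hvX (h2 v (h1 ▸ by simp))
          · exfalso
            rw [Finset.mem_sym2_iff] at h2
            exact hvX (h2 v (h1 ▸ by simp))
          · exact ⟨h1, h2⟩
        · rintro ⟨h1, h2⟩
          exact ⟨Or.inr (Or.inr h1), h2⟩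
      rw [heq]
      exact hG.2 X hXsub hX2
end

section
/- Any graph obtained from the complete graph K₂ by a finite sequence of extension operations (each adding a new vertex adjacent to two distinct existing vertices) is minimally rigid in the Laman sense. -/
lemma k2_laman {G : FinGraph} (h : G.IsK2) : G.Laman := by
  obtain ⟨a, b, hab, hv, he⟩ := h
  have hvc : G.verts.card = 2 := by rw [hv]; exact Finset.card_pair hab
  have hec : G.edges.card = 1 := by rw [he]; simp
  constructor
  · rw [hvc, hec]; norm_num
  · intro X hX hX2
    have h1 : (G.inducedEdges X).card ≤ 1 := by
      calc (G.inducedEdges X).card ≤ G.edges.card :=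
            Finset.card_le_card (Finset.inter_subset_left)
        _ = 1 := hec
    have : (1 : ℤ) ≤ 2 * X.card - 3 := by
      have : (2 : ℤ) ≤ X.card := by exact_mod_cast hX2
      linarith
    calc ((G.inducedEdges X).card : ℤ) ≤ 1 := by exact_mod_cast h1
      _ ≤ 2 * X.card - 3 := this

lemma laman_ext {G G₁ : FinGraph} (hG : G.Laman) (h : G.IsExtension G₁) :
    G₁.Laman := by
  obtain ⟨v, r₁, r₂, hv, hr₁, hr₂, hne, hverts, hedges⟩ := h
  have hvr₁ : v ≠ r₁ := fun h => hv (h ▸ hr₁)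
  have hvr₂ : v ≠ r₂ := fun h => hv (h ▸ hr₂)
  have hold : ∀ e ∈ G.edges, v ∉ e := fun e he hvmem => hv (G.edge_mem e he v hvmem)
  have he₁ : s(v, r₁) ∉ G.edges := fun h => hold _ h (by simp)
  have he₂ : s(v, r₂) ∉ G.edges := fun h => hold _ h (by simp)
  have he12 : s(v, r₁) ≠ s(v, r₂) := by
    intro hcontra
    rw [Sym2.eq_iff] at hcontra
    rcases hcontra with ⟨_, h⟩ | ⟨h, _⟩
    · exact hne h
    · exact hvr₂ h
  have hcard_e : G₁.edges.card = G.edges.card + 2 := by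
    rw [hedges, Finset.card_insert_of_notMem (by simp [he₁, he12]),
      Finset.card_insert_of_notMem he₂]
  have hcard_v : G₁.verts.card = G.verts.card + 1 := by
    rw [hverts, Finset.card_insert_of_notMem hv]
  obtain ⟨hG1, hG2⟩ := hG
  constructor
  · rw [hcard_e, hcard_v]; push_cast; linarith
  · intro X hX hX2
    by_cases hvX : v ∈ X
    · set Y := X.erase v with hY
      have hYsub : Y ⊆ G.verts := by
        intro x hx
        have hx' := Finset.mem_erase.mp hx
        have hxv := hX hx'.2
        rw [hverts] at hxv
        rcases Finset.mem_insert.mp hxv with h | h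
        · exact absurd h hx'.1
        · exact h
      have hYcard : X.card = Y.card + 1 := by
        have h1 : Y.card = X.card - 1 := Finset.card_erase_of_mem hvX
        omega
      -- the induced edges are contained in the two new edges plus old induced edges
      have hsub : G₁.inducedEdges X ⊆
          insert s(v, r₁) (insert s(v, r₂) (G.inducedEdges Y)) := by
        intro e he
        rw [FinGraph.inducedEdges, Finset.mem_inter, hedges] at he
        obtain ⟨heE, heX⟩ := he
        simp only [Finset.mem_insert] at heE ⊢
        rcases heE with rfl | rfl | heE
        · exact Or.inl rfl
        · exact Or.inr (Or.inl rfl)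
        · refine Or.inr (Or.inr ?_)
          rw [FinGraph.inducedEdges, Finset.mem_inter]
          refine ⟨heE, ?_⟩
          rw [Finset.mem_sym2_iff] at heX ⊢
          intro y hy
          exact Finset.mem_erase.mpr ⟨fun hyv => hold e heE (hyv ▸ hy), heX y hy⟩
      have hle : (G₁.inducedEdges X).card ≤ (G.inducedEdges Y).card + 2 := by
        calc (G₁.inducedEdges X).card
            ≤ (insert s(v, r₁) (insert s(v, r₂) (G.inducedEdges Y))).card :=
              Finset.card_le_card hsub
          _ ≤ (insert s(v, r₂) (G.inducedEdges Y)).card + 1 := Finset.card_insert_le _ _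
          _ ≤ (G.inducedEdges Y).card + 1 + 1 := by
              exact Nat.add_le_add_right (Finset.card_insert_le _ _) 1
          _ = (G.inducedEdges Y).card + 2 := by ring
      have hY1 : 1 ≤ Y.card := by omega
      rcases eq_or_lt_of_le hY1 with h1 | h2
      · -- Y = {r}, so X = {v, r}
        obtain ⟨r, hr⟩ := Finset.card_eq_one.mp h1.symm
        have hsingle : G₁.inducedEdges X ⊆ {s(v, r)} := by
          intro e
          induction e using Sym2.ind with
          | _ a b =>
            intro he
            rw [FinGraph.inducedEdges, Finset.mem_inter, hedges] at he
            obtain ⟨heE, heX⟩ := he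
            rw [Finset.mem_sym2_iff] at heX
            have hmem : ∀ y ∈ s(a, b), y = v ∨ y = r := by
              intro y hy
              by_cases hyv : y = v
              · exact Or.inl hyv
              · refine Or.inr ?_
                have : y ∈ Y := Finset.mem_erase.mpr ⟨hyv, heX y hy⟩
                rw [hr] at this
                exact Finset.mem_singleton.mp this
            simp only [Finset.mem_insert, Finset.mem_singleton] at heE ⊢
            rcases heE with heq | heq | heE
            · rw [heq]
              rcases hmem r₁ (by rw [heq]; simp) with h | h
              · exact absurd h.symm hvr₁
              · rw [h]
            · rw [heq]
              rcases hmem r₂ (by rw [heq]; simp) with h | h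
              · exact absurd h.symm hvr₂
              · rw [h]
            · exfalso
              have hav : a ≠ v := fun hh => hold _ heE (hh ▸ Sym2.mem_mk_left a b)
              have hbv : b ≠ v := fun hh => hold _ heE (hh ▸ Sym2.mem_mk_right a b)
              have har : a = r := (hmem a (Sym2.mem_mk_left a b)).resolve_left hav
              have hbr : b = r := (hmem b (Sym2.mem_mk_right a b)).resolve_left hbv
              exact G.loopless _ heE (by rw [har, hbr]; exact Sym2.mk_isDiag_iff.mpr rfl)
        have hle1 : (G₁.inducedEdges X).card ≤ 1 := by
          calc (G₁.inducedEdges X).card ≤ ({s(v, r)} : Finset (Sym2 ℕ)).card :=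
                Finset.card_le_card hsingle
            _ = 1 := Finset.card_singleton _
        have hX2' : X.card = 2 := by omega
        rw [hX2']
        have : ((G₁.inducedEdges X).card : ℤ) ≤ 1 := by exact_mod_cast hle1
        push_cast
        linarith
      · -- Y.card ≥ 2
        have hbound := hG2 Y hYsub h2
        have hle' : ((G₁.inducedEdges X).card : ℤ) ≤ (G.inducedEdges Y).card + 2 := by
          exact_mod_cast hle
        have hYc : (X.card : ℤ) = (Y.card : ℤ) + 1 := by exact_mod_cast hYcard
        linarith
    · -- v ∉ X : induced edges unchanged
      have hXsub : X ⊆ G.verts := by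
        intro x hx
        have hxv := hX hx
        rw [hverts] at hxv
        rcases Finset.mem_insert.mp hxv with h | h
        · exact absurd (h ▸ hx) hvX
        · exact h
      have heq : G₁.inducedEdges X = G.inducedEdges X := by
        unfold FinGraph.inducedEdges
        rw [hedges]
        ext e
        simp only [Finset.mem_inter, Finset.mem_insert]
        constructor
        · rintro ⟨rfl | rfl | h, hX'⟩
          · exfalso; rw [Finset.mem_sym2_iff] at hX'; exact hvX (hX' v (by simp))
          · exfalso; rw [Finset.mem_sym2_iff] at hX'; exact hvX (hX' v (by simp))
          · exact ⟨h, hX'⟩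
        · tauto
      rw [heq]
      exact hG2 X hXsub hX2

/-- any graph obtained from `K₂` by a finite sequence of extension
operations is minimally rigid (Laman). -/
theorem extensions_from_K2_laman (G₀ G : FinGraph) (h0 : G₀.IsK2)
    (h : Relation.ReflTransGen FinGraph.IsExtension G₀ G) : G.Laman := by
  induction h with
  | refl => exact k2_laman h0
  | tail _ hext ih => exact laman_ext ih hext
end

section
/- A branch B(v) remains connected after removing any single vertex; i.e., every branch is 2-connected (has no cut vertex) provided it has at least 3 vertices. -/
/-- A *branch* `B(v)`: a graph built from the `K₂` on roots `r₁, r₂` by a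
sequence of extensions, in which every non-root vertex has exactly two distinct
parents added strictly earlier (witnessed by `rank`), the leaf `lf = v` is the
last added vertex (nobody's parent), and every non-root non-leaf vertex has at
least one child (so every vertex is an ancestor of the leaf). -/
structure Branch where
  verts : Finset ℕ
  r₁ : ℕ
  r₂ : ℕ
  lf : ℕ
  root_ne : r₁ ≠ r₂
  r₁_mem : r₁ ∈ verts
  r₂_mem : r₂ ∈ verts
  leaf_mem : lf ∈ verts
  leaf_ne_r₁ : lf ≠ r₁
  leaf_ne_r₂ : lf ≠ r₂
  p₁ : ℕ → ℕ
  p₂ : ℕ → ℕ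
  rank : ℕ → ℕ
  parent₁_mem : ∀ x ∈ verts, x ≠ r₁ → x ≠ r₂ → p₁ x ∈ verts
  parent₂_mem : ∀ x ∈ verts, x ≠ r₁ → x ≠ r₂ → p₂ x ∈ verts
  parents_ne : ∀ x ∈ verts, x ≠ r₁ → x ≠ r₂ → p₁ x ≠ p₂ x
  rank_lt₁ : ∀ x ∈ verts, x ≠ r₁ → x ≠ r₂ → rank (p₁ x) < rank x
  rank_lt₂ : ∀ x ∈ verts, x ≠ r₁ → x ≠ r₂ → rank (p₂ x) < rank x
  leaf_no_child : ∀ x ∈ verts, x ≠ r₁ → x ≠ r₂ → p₁ x ≠ lf ∧ p₂ x ≠ lf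
  has_child : ∀ x ∈ verts, x ≠ r₁ → x ≠ r₂ → x ≠ lf →
    ∃ c ∈ verts, c ≠ r₁ ∧ c ≠ r₂ ∧ (p₁ c = x ∨ p₂ c = x)

/-- The edge set of a branch: the root edge together with all parent-child edges. -/
def Branch.edges (B : Branch) : Finset (Sym2 ℕ) :=
  insert s(B.r₁, B.r₂)
    ((B.verts.filter (fun x => x ≠ B.r₁ ∧ x ≠ B.r₂)).biUnion
      (fun x => {s(x, B.p₁ x), s(x, B.p₂ x)}))

/-- The branch viewed as a simple graph on `ℕ`. -/
def Branch.graph (B : Branch) : SimpleGraph ℕ :=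
  SimpleGraph.fromEdgeSet (B.edges : Set (Sym2 ℕ))

lemma Branch.adj_parent₁ (B : Branch) {x : ℕ} (hx : x ∈ B.verts) (h1 : x ≠ B.r₁)
    (h2 : x ≠ B.r₂) : B.graph.Adj x (B.p₁ x) := by
  rw [Branch.graph, SimpleGraph.fromEdgeSet_adj]
  constructor
  · rw [Finset.mem_coe, Branch.edges, Finset.mem_insert]
    right
    exact Finset.mem_biUnion.2 ⟨x, Finset.mem_filter.2 ⟨hx, h1, h2⟩, by simp⟩
  · intro h
    have hlt := B.rank_lt₁ x hx h1 h2
    rw [← h] at hlt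
    exact lt_irrefl _ hlt

lemma Branch.adj_parent₂ (B : Branch) {x : ℕ} (hx : x ∈ B.verts) (h1 : x ≠ B.r₁)
    (h2 : x ≠ B.r₂) : B.graph.Adj x (B.p₂ x) := by
  rw [Branch.graph, SimpleGraph.fromEdgeSet_adj]
  constructor
  · rw [Finset.mem_coe, Branch.edges, Finset.mem_insert]
    right
    exact Finset.mem_biUnion.2 ⟨x, Finset.mem_filter.2 ⟨hx, h1, h2⟩, by simp⟩
  · intro h
    have hlt := B.rank_lt₂ x hx h1 h2
    rw [← h] at hlt
    exact lt_irrefl _ hlt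

lemma Branch.adj_roots (B : Branch) : B.graph.Adj B.r₁ B.r₂ := by
  rw [Branch.graph, SimpleGraph.fromEdgeSet_adj]
  exact ⟨by rw [Finset.mem_coe, Branch.edges]; exact Finset.mem_insert_self _ _, B.root_ne⟩

lemma Branch.toRoot (B : Branch) (t : ℕ) :
    ∀ n, ∀ x ∈ B.verts, x ≠ t → B.rank x ≤ n →
      (∃ w : B.graph.Walk x B.r₁, t ∉ w.support) ∨
      (∃ w : B.graph.Walk x B.r₂, t ∉ w.support) := by
  intro n
  induction n with
  | zero =>
    intro x hx hxt hr
    by_cases h1 : x = B.r₁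
    · subst h1; exact Or.inl ⟨SimpleGraph.Walk.nil, by simpa using Ne.symm hxt⟩
    by_cases h2 : x = B.r₂
    · subst h2; exact Or.inr ⟨SimpleGraph.Walk.nil, by simpa using Ne.symm hxt⟩
    exact absurd (lt_of_lt_of_le (B.rank_lt₁ x hx h1 h2) hr) (Nat.not_lt_zero _)
  | succ n ih =>
    intro x hx hxt hr
    by_cases h1 : x = B.r₁
    · subst h1; exact Or.inl ⟨SimpleGraph.Walk.nil, by simpa using Ne.symm hxt⟩
    by_cases h2 : x = B.r₂
    · subst h2; exact Or.inr ⟨SimpleGraph.Walk.nil, by simpa using Ne.symm hxt⟩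
    -- pick a parent ≠ t
    have hne := B.parents_ne x hx h1 h2
    by_cases hp1 : B.p₁ x = t
    · -- use p₂
      have hpt : B.p₂ x ≠ t := fun h => hne (hp1.trans h.symm)
      have hpm := B.parent₂_mem x hx h1 h2
      have hpr : B.rank (B.p₂ x) ≤ n :=
        Nat.lt_succ_iff.mp (lt_of_lt_of_le (B.rank_lt₂ x hx h1 h2) hr)
      rcases ih (B.p₂ x) hpm hpt hpr with ⟨w, hw⟩ | ⟨w, hw⟩
      · exact Or.inl ⟨SimpleGraph.Walk.cons (B.adj_parent₂ hx h1 h2) w, by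
          simp only [SimpleGraph.Walk.support_cons, List.mem_cons]
          rintro (h | h); exact hxt h.symm; exact hw h⟩
      · exact Or.inr ⟨SimpleGraph.Walk.cons (B.adj_parent₂ hx h1 h2) w, by
          simp only [SimpleGraph.Walk.support_cons, List.mem_cons]
          rintro (h | h); exact hxt h.symm; exact hw h⟩
    · have hpm := B.parent₁_mem x hx h1 h2
      have hpr : B.rank (B.p₁ x) ≤ n :=
        Nat.lt_succ_iff.mp (lt_of_lt_of_le (B.rank_lt₁ x hx h1 h2) hr)
      rcases ih (B.p₁ x) hpm hp1 hpr with ⟨w, hw⟩ | ⟨w, hw⟩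
      · exact Or.inl ⟨SimpleGraph.Walk.cons (B.adj_parent₁ hx h1 h2) w, by
          simp only [SimpleGraph.Walk.support_cons, List.mem_cons]
          rintro (h | h); exact hxt h.symm; exact hw h⟩
      · exact Or.inr ⟨SimpleGraph.Walk.cons (B.adj_parent₁ hx h1 h2) w, by
          simp only [SimpleGraph.Walk.support_cons, List.mem_cons]
          rintro (h | h); exact hxt h.symm; exact hw h⟩

/-- a branch with at least 3 vertices has no cut vertex: after
removing any single vertex `t`, any two remaining vertices of the branch are
joined by a walk avoiding `t`. -/
theorem branch_two_connected (B : Branch) (h3 : 3 ≤ B.verts.card) (t : ℕ) :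
    ∀ x ∈ B.verts, ∀ y ∈ B.verts, x ≠ t → y ≠ t →
      ∃ w : B.graph.Walk x y, t ∉ w.support := by
  intro x hx y hy hxt hyt
  rcases B.toRoot t (B.rank x) x hx hxt le_rfl with ⟨w₁, hw₁⟩ | ⟨w₁, hw₁⟩ <;>
  rcases B.toRoot t (B.rank y) y hy hyt le_rfl with ⟨w₂, hw₂⟩ | ⟨w₂, hw₂⟩
  · exact ⟨w₁.append w₂.reverse, by
      rw [SimpleGraph.Walk.mem_support_append_iff, SimpleGraph.Walk.support_reverse, List.mem_reverse]
      rintro (h | h); exact hw₁ h; exact hw₂ h⟩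
  · have ht2 : t ∉ ({B.r₂} : Set ℕ) := by
      intro h
      exact hw₂ (by simpa using h ▸ w₂.end_mem_support)
    refine ⟨w₁.append ((SimpleGraph.Walk.cons B.adj_roots SimpleGraph.Walk.nil).append
      w₂.reverse), ?_⟩
    rw [SimpleGraph.Walk.mem_support_append_iff, SimpleGraph.Walk.mem_support_append_iff,
      SimpleGraph.Walk.support_reverse, List.mem_reverse, SimpleGraph.Walk.support_cons]
    rintro (h | h | h)
    · exact hw₁ h
    · rcases List.mem_cons.mp h with h | h
      · exact hw₁ (h ▸ w₁.end_mem_support)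
      · simp only [SimpleGraph.Walk.support_nil, List.mem_singleton] at h
        exact hw₂ (h ▸ w₂.end_mem_support)
    · exact hw₂ h
  · refine ⟨w₁.append ((SimpleGraph.Walk.cons B.adj_roots.symm SimpleGraph.Walk.nil).append
      w₂.reverse), ?_⟩
    rw [SimpleGraph.Walk.mem_support_append_iff, SimpleGraph.Walk.mem_support_append_iff,
      SimpleGraph.Walk.support_reverse, List.mem_reverse, SimpleGraph.Walk.support_cons]
    rintro (h | h | h)
    · exact hw₁ h
    · rcases List.mem_cons.mp h with h | h
      · exact hw₁ (h ▸ w₁.end_mem_support)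
      · simp only [SimpleGraph.Walk.support_nil, List.mem_singleton] at h
        exact hw₂ (h ▸ w₂.end_mem_support)
    · exact hw₂ h
  · exact ⟨w₁.append w₂.reverse, by
      rw [SimpleGraph.Walk.mem_support_append_iff, SimpleGraph.Walk.support_reverse, List.mem_reverse]
      rintro (h | h); exact hw₁ h; exact hw₂ h⟩
end

section
/- (Branch Lemma) In a branch B(v) = (V_B, E_B) with roots r₁, r₂ and leaf v, there is no vertex set X such that simultaneously: (1) X is a proper subset of V_B; (2) X contains r₁, r₂, and v; and (3) |E[X]| = 2|X| - 3. -/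
/-- Branch Lemma: in a branch `B(v)` there is no vertex set `X`
which is a proper subset of the vertices, contains both roots and the leaf `v`,
and satisfies `|E[X]| = 2|X| - 3`. -/
theorem branch_lemma (B : Branch) :
    ¬ ∃ X : Finset ℕ, X ⊂ B.verts ∧ B.r₁ ∈ X ∧ B.r₂ ∈ X ∧ B.lf ∈ X ∧
      (((B.edges ∩ X.sym2).card : ℤ) = 2 * X.card - 3) := by
  rintro ⟨X, hXss, hr1, hr2, hlf, hcard⟩
  classical
  set Xnr : Finset ℕ := X.filter (fun x => x ≠ B.r₁ ∧ x ≠ B.r₂) with hXnrdef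
  set t : ℕ → ℕ :=
    fun x => (({s(x, B.p₁ x), s(x, B.p₂ x)} : Finset (Sym2 ℕ)) ∩ X.sym2).card with ht
  -- Claim A: containment
  have hsubA : B.edges ∩ X.sym2 ⊆
      insert s(B.r₁, B.r₂) (Xnr.biUnion fun x =>
        ({s(x, B.p₁ x), s(x, B.p₂ x)} : Finset (Sym2 ℕ)) ∩ X.sym2) := by
    intro e he
    obtain ⟨heE, heX⟩ := Finset.mem_inter.mp he
    simp only [Branch.edges, Finset.mem_insert, Finset.mem_biUnion, Finset.mem_filter] at heE
    rcases heE with h | ⟨x, ⟨hxv, hx1, hx2⟩, hx⟩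
    · simp [h]
    · have hx' : e ∈ ({s(x, B.p₁ x), s(x, B.p₂ x)} : Finset (Sym2 ℕ)) := by
        simp only [Finset.mem_insert]; exact hx
      have hxX : x ∈ X := by
        rcases hx with h | h
        · subst h; exact (Finset.mk_mem_sym2_iff.mp heX).1
        · rw [Finset.mem_singleton] at h; subst h
          exact (Finset.mk_mem_sym2_iff.mp heX).1
      exact Finset.mem_insert_of_mem (Finset.mem_biUnion.mpr
        ⟨x, Finset.mem_filter.mpr ⟨hxX, hx1, hx2⟩, Finset.mem_inter.mpr ⟨hx', heX⟩⟩)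
  have hcard_le : (B.edges ∩ X.sym2).card ≤ 1 + ∑ x ∈ Xnr, t x := by
    calc (B.edges ∩ X.sym2).card
        ≤ (insert s(B.r₁, B.r₂) (Xnr.biUnion fun x =>
            ({s(x, B.p₁ x), s(x, B.p₂ x)} : Finset (Sym2 ℕ)) ∩ X.sym2)).card :=
          Finset.card_le_card hsubA
      _ ≤ (Xnr.biUnion fun x =>
            ({s(x, B.p₁ x), s(x, B.p₂ x)} : Finset (Sym2 ℕ)) ∩ X.sym2).card + 1 :=
          Finset.card_insert_le _ _
      _ ≤ (∑ x ∈ Xnr, t x) + 1 := by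
          exact Nat.add_le_add_right (Finset.card_biUnion_le) 1
      _ = 1 + ∑ x ∈ Xnr, t x := by ring
  have htle : ∀ x, t x ≤ 2 := by
    intro x
    calc t x ≤ ({s(x, B.p₁ x), s(x, B.p₂ x)} : Finset (Sym2 ℕ)).card :=
          Finset.card_le_card Finset.inter_subset_left
      _ ≤ 2 := by
          refine le_trans (Finset.card_insert_le _ _) ?_
          simp
  -- |Xnr| + 2 ≤ |X|
  have hXnr_card : Xnr.card + 2 ≤ X.card := by
    have hr1n : B.r₁ ∉ Xnr := by simp [hXnrdef]
    have hr2n : B.r₂ ∉ Xnr := by simp [hXnrdef]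
    have hsub : insert B.r₁ (insert B.r₂ Xnr) ⊆ X := by
      intro z hz
      rcases Finset.mem_insert.mp hz with h | hz
      · exact h ▸ hr1
      rcases Finset.mem_insert.mp hz with h | hz
      · exact h ▸ hr2
      · exact (Finset.mem_filter.mp hz).1
    have h1 : (insert B.r₁ (insert B.r₂ Xnr)).card = Xnr.card + 2 := by
      rw [Finset.card_insert_of_notMem, Finset.card_insert_of_notMem hr2n]
      simp [hr1n, B.root_ne]
    have := Finset.card_le_card hsub
    omega
  -- sum is at least 2 * |Xnr|
  have hsum_ge : 2 * Xnr.card ≤ ∑ x ∈ Xnr, t x := by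
    have h1 : ((B.edges ∩ X.sym2).card : ℤ) = 2 * X.card - 3 := hcard
    omega
  -- each t x = 2
  have hall : ∀ x ∈ Xnr, t x = 2 := by
    by_contra h
    push_neg at h
    obtain ⟨x₀, hx₀, hne⟩ := h
    have hlt : ∑ x ∈ Xnr, t x < ∑ _x ∈ Xnr, 2 := by
      refine Finset.sum_lt_sum (fun i _ => htle i) ⟨x₀, hx₀, ?_⟩
      have := htle x₀; omega
    rw [Finset.sum_const, smul_eq_mul] at hlt
    omega
  -- parent closure
  have hclosed : ∀ x ∈ Xnr, B.p₁ x ∈ X ∧ B.p₂ x ∈ X := by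
    intro x hx
    have h2 : (({s(x, B.p₁ x), s(x, B.p₂ x)} : Finset (Sym2 ℕ)) ∩ X.sym2).card = 2 :=
      hall x hx
    have hle2 : ({s(x, B.p₁ x), s(x, B.p₂ x)} : Finset (Sym2 ℕ)).card ≤ 2 := by
      refine le_trans (Finset.card_insert_le _ _) ?_
      simp
    have heq : ({s(x, B.p₁ x), s(x, B.p₂ x)} : Finset (Sym2 ℕ)) ∩ X.sym2
        = ({s(x, B.p₁ x), s(x, B.p₂ x)} : Finset (Sym2 ℕ)) := by
      apply Finset.eq_of_subset_of_card_le Finset.inter_subset_left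
      omega
    constructor
    · have hm : s(x, B.p₁ x) ∈
          ({s(x, B.p₁ x), s(x, B.p₂ x)} : Finset (Sym2 ℕ)) ∩ X.sym2 := by
        rw [heq]; simp
      exact (Finset.mk_mem_sym2_iff.mp (Finset.mem_inter.mp hm).2).2
    · have hm : s(x, B.p₂ x) ∈
          ({s(x, B.p₁ x), s(x, B.p₂ x)} : Finset (Sym2 ℕ)) ∩ X.sym2 := by
        rw [heq]; simp
      exact (Finset.mk_mem_sym2_iff.mp (Finset.mem_inter.mp hm).2).2
  -- descent step
  have step : ∀ y ∈ B.verts, y ∉ X → ∃ c ∈ B.verts, c ∉ X ∧ B.rank y < B.rank c := by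
    intro y hyv hyX
    have hy1 : y ≠ B.r₁ := fun h => hyX (h ▸ hr1)
    have hy2 : y ≠ B.r₂ := fun h => hyX (h ▸ hr2)
    have hylf : y ≠ B.lf := fun h => hyX (h ▸ hlf)
    obtain ⟨c, hcv, hc1, hc2, hcp⟩ := B.has_child y hyv hy1 hy2 hylf
    have hcX : c ∉ X := by
      intro hcX
      have hcXnr : c ∈ Xnr := Finset.mem_filter.mpr ⟨hcX, hc1, hc2⟩
      obtain ⟨h1, h2⟩ := hclosed c hcXnr
      rcases hcp with h | h
      · exact hyX (h ▸ h1)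
      · exact hyX (h ▸ h2)
    have hrk : B.rank y < B.rank c := by
      rcases hcp with h | h
      · exact h ▸ B.rank_lt₁ c hcv hc1 hc2
      · exact h ▸ B.rank_lt₂ c hcv hc1 hc2
    exact ⟨c, hcv, hcX, hrk⟩
  -- main induction on the number of vertices of higher rank
  have main : ∀ n, ∀ y ∈ B.verts, y ∉ X →
      (B.verts.filter (fun z => B.rank y < B.rank z)).card ≤ n → False := by
    intro n
    induction n with
    | zero =>
      intro y hyv hyX hle
      obtain ⟨c, hcv, hcX, hrk⟩ := step y hyv hyX
      have hc : c ∈ B.verts.filter (fun z => B.rank y < B.rank z) :=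
        Finset.mem_filter.mpr ⟨hcv, hrk⟩
      have := Finset.card_pos.mpr ⟨c, hc⟩
      omega
    | succ n ih =>
      intro y hyv hyX hle
      obtain ⟨c, hcv, hcX, hrk⟩ := step y hyv hyX
      apply ih c hcv hcX
      have hsub : B.verts.filter (fun z => B.rank c < B.rank z) ⊆
          B.verts.filter (fun z => B.rank y < B.rank z) := by
        intro z hz
        rw [Finset.mem_filter] at hz ⊢
        exact ⟨hz.1, lt_trans hrk hz.2⟩
      have hss : B.verts.filter (fun z => B.rank c < B.rank z) ⊂
          B.verts.filter (fun z => B.rank y < B.rank z) := by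
        refine (Finset.ssubset_iff_of_subset hsub).mpr
          ⟨c, Finset.mem_filter.mpr ⟨hcv, hrk⟩, ?_⟩
        simp
      have := Finset.card_lt_card hss
      omega
  obtain ⟨y, hyv, hyX⟩ := Finset.exists_of_ssubset hXss
  exact main _ y hyv hyX le_rfl
end

section
/- In a branch B(v) with roots r₁, r₂, removing both roots r₁ and r₂ leaves the remaining graph connected (in particular v still has a path to each of its remaining ancestors). -/
lemma Branch.adj_parent (B : Branch) (c : ℕ) (hc : c ∈ B.verts) (hc1 : c ≠ B.r₁)
    (hc2 : c ≠ B.r₂) (x : ℕ) (hp : B.p₁ c = x ∨ B.p₂ c = x) (hne : x ≠ c) :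
    B.graph.Adj x c := by
  rw [Branch.graph, SimpleGraph.fromEdgeSet_adj]
  refine ⟨?_, hne⟩
  simp only [Finset.coe_insert, Set.mem_insert_iff, Finset.coe_biUnion, Finset.mem_coe,
    Finset.mem_filter, Set.mem_iUnion, Branch.edges]
  right
  refine ⟨c, ⟨hc, hc1, hc2⟩, ?_⟩
  rcases hp with h | h <;> simp [← h, Sym2.eq_swap]

lemma Branch.walk_to_leaf (B : Branch) (x : ℕ) (hx : x ∈ B.verts) (h1 : x ≠ B.r₁)
    (h2 : x ≠ B.r₂) :
    ∃ w : B.graph.Walk x B.lf, B.r₁ ∉ w.support ∧ B.r₂ ∉ w.support := by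
  generalize hn : (B.verts.filter (fun w => B.rank x < B.rank w)).card = n
  induction n using Nat.strong_induction_on generalizing x with
  | _ n ih =>
    by_cases hlf : x = B.lf
    · subst hlf
      exact ⟨SimpleGraph.Walk.nil, by simp [Ne.symm h1], by simp [Ne.symm h2]⟩
    · obtain ⟨c, hc, hc1, hc2, hp⟩ := B.has_child x hx h1 h2 hlf
      have hrank : B.rank x < B.rank c := by
        rcases hp with h | h
        · have := B.rank_lt₁ c hc hc1 hc2; rwa [h] at this
        · have := B.rank_lt₂ c hc hc1 hc2; rwa [h] at this
      have hne : x ≠ c := fun h => by subst h; exact lt_irrefl _ hrank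
      have hsub : (B.verts.filter (fun w => B.rank c < B.rank w)) ⊂
          (B.verts.filter (fun w => B.rank x < B.rank w)) := by
        constructor
        · intro w hw
          simp only [Finset.mem_filter] at hw ⊢
          exact ⟨hw.1, lt_trans hrank hw.2⟩
        · intro hcon
          have := hcon (Finset.mem_filter.mpr ⟨hc, hrank⟩)
          simp only [Finset.mem_filter] at this
          exact lt_irrefl _ this.2
      have hlt : (B.verts.filter (fun w => B.rank c < B.rank w)).card < n := by
        rw [← hn]; exact Finset.card_lt_card hsub
      obtain ⟨w, hw1, hw2⟩ := ih _ hlt c hc hc1 hc2 rfl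
      refine ⟨SimpleGraph.Walk.cons (B.adj_parent c hc hc1 hc2 x hp hne) w, ?_, ?_⟩
      · simp only [SimpleGraph.Walk.support_cons, List.mem_cons, not_or]
        exact ⟨fun h => h1 h.symm, hw1⟩
      · simp only [SimpleGraph.Walk.support_cons, List.mem_cons, not_or]
        exact ⟨fun h => h2 h.symm, hw2⟩

/-- removing both roots from a branch leaves the remaining graph
connected: any two non-root vertices are joined by a walk avoiding both roots. -/
theorem branch_minus_roots_connected (B : Branch) :
    ∀ x ∈ B.verts, ∀ y ∈ B.verts, x ≠ B.r₁ → x ≠ B.r₂ → y ≠ B.r₁ → y ≠ B.r₂ →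
      ∃ w : B.graph.Walk x y, B.r₁ ∉ w.support ∧ B.r₂ ∉ w.support := by
  intro x hx y hy hx1 hx2 hy1 hy2
  obtain ⟨w₁, h11, h12⟩ := B.walk_to_leaf x hx hx1 hx2
  obtain ⟨w₂, h21, h22⟩ := B.walk_to_leaf y hy hy1 hy2
  refine ⟨w₁.append w₂.reverse, ?_, ?_⟩
  · intro h
    rw [SimpleGraph.Walk.mem_support_append_iff] at h
    rcases h with h | h
    · exact h11 h
    · rw [SimpleGraph.Walk.support_reverse, List.mem_reverse] at h; exact h21 h
  · intro h
    rw [SimpleGraph.Walk.mem_support_append_iff] at h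
    rcases h with h | h
    · exact h12 h
    · rw [SimpleGraph.Walk.support_reverse, List.mem_reverse] at h; exact h22 h
end

section
/- Let B(v) be a branch with roots r₁, r₂ and leaf v. If the removal of two vertices t₁, t₂ (with v ∉ {t₁, t₂} and at most one root in {t₁, t₂}) disconnects B(v), then the resulting graph has exactly two connected components, and the leaf v lies in a different component from the remaining root(s). -/
namespace Branch
variable (B : Branch)

lemma adj_roots_s8 : B.graph.Adj B.r₁ B.r₂ := by
  rw [Branch.graph, SimpleGraph.fromEdgeSet_adj]
  refine ⟨?_, B.root_ne⟩
  simp [Branch.edges]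

lemma adj_parent₁_s8 {x : ℕ} (hx : x ∈ B.verts) (h1 : x ≠ B.r₁) (h2 : x ≠ B.r₂) :
    B.graph.Adj x (B.p₁ x) := by
  rw [Branch.graph, SimpleGraph.fromEdgeSet_adj]
  refine ⟨?_, fun h => by have := B.rank_lt₁ x hx h1 h2; rw [← h] at this; omega⟩
  simp only [Finset.mem_coe, Branch.edges, Finset.mem_insert, Finset.mem_biUnion,
    Finset.mem_filter]
  exact Or.inr ⟨x, ⟨hx, h1, h2⟩, by simp⟩

lemma adj_parent₂_s8 {x : ℕ} (hx : x ∈ B.verts) (h1 : x ≠ B.r₁) (h2 : x ≠ B.r₂) :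
    B.graph.Adj x (B.p₂ x) := by
  rw [Branch.graph, SimpleGraph.fromEdgeSet_adj]
  refine ⟨?_, fun h => by have := B.rank_lt₂ x hx h1 h2; rw [← h] at this; omega⟩
  simp only [Finset.mem_coe, Branch.edges, Finset.mem_insert, Finset.mem_biUnion,
    Finset.mem_filter]
  exact Or.inr ⟨x, ⟨hx, h1, h2⟩, by simp⟩

lemma adj_mem {u v : ℕ} (h : B.graph.Adj u v) : u ∈ B.verts ∧ v ∈ B.verts := by
  rw [Branch.graph, SimpleGraph.fromEdgeSet_adj] at h
  obtain ⟨he, -⟩ := h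
  simp only [Finset.mem_coe, Branch.edges, Finset.mem_insert, Finset.mem_biUnion,
    Finset.mem_filter, Finset.mem_singleton] at he
  rcases he with h | ⟨x, ⟨hx, h1, h2⟩, h⟩
  · rw [Sym2.eq_iff] at h
    rcases h with ⟨rfl, rfl⟩ | ⟨rfl, rfl⟩
    · exact ⟨B.r₁_mem, B.r₂_mem⟩
    · exact ⟨B.r₂_mem, B.r₁_mem⟩
  · rcases h with h | h <;> rw [Sym2.eq_iff] at h <;>
      rcases h with ⟨hu, hv⟩ | ⟨hu, hv⟩ <;> rw [hu, hv]
    · exact ⟨hx, B.parent₁_mem x hx h1 h2⟩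
    · exact ⟨B.parent₁_mem x hx h1 h2, hx⟩
    · exact ⟨hx, B.parent₂_mem x hx h1 h2⟩
    · exact ⟨B.parent₂_mem x hx h1 h2, hx⟩

lemma walk_support_mem {x y : ℕ} (hx : x ∈ B.verts) (w : B.graph.Walk x y) :
    ∀ z ∈ w.support, z ∈ B.verts := by
  induction w with
  | nil => simpa using hx
  | @cons a b c h p ih =>
    intro z hz
    rw [SimpleGraph.Walk.support_cons, List.mem_cons] at hz
    rcases hz with rfl | hz
    · exact hx
    · exact ih (B.adj_mem h).2 z hz

lemma ascend (B : Branch) : ∀ n (x : ℕ),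
    (B.verts.filter fun y => B.rank x < B.rank y).card = n →
    x ∈ B.verts → x ≠ B.r₁ → x ≠ B.r₂ →
    ∃ w : B.graph.Walk x B.lf, ∀ z ∈ w.support, B.rank x ≤ B.rank z := by
  intro n
  induction n using Nat.strong_induction_on with
  | _ n ih =>
    intro x hcard hx h1 h2
    by_cases hlf : x = B.lf
    · subst hlf
      exact ⟨SimpleGraph.Walk.nil, by simp⟩
    · obtain ⟨c, hc, hc1, hc2, hpc⟩ := B.has_child x hx h1 h2 hlf
      have hrc : B.rank x < B.rank c := by
        rcases hpc with h | h
        · have := B.rank_lt₁ c hc hc1 hc2; rw [h] at this; exact this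
        · have := B.rank_lt₂ c hc hc1 hc2; rw [h] at this; exact this
      have hadj : B.graph.Adj x c := by
        rcases hpc with h | h
        · have := B.adj_parent₁_s8 hc hc1 hc2; rw [h] at this; exact this.symm
        · have := B.adj_parent₂_s8 hc hc1 hc2; rw [h] at this; exact this.symm
      have hsub : (B.verts.filter fun y => B.rank c < B.rank y) ⊆
          (B.verts.filter fun y => B.rank x < B.rank y) := by
        intro z hz
        rw [Finset.mem_filter] at hz ⊢
        exact ⟨hz.1, lt_trans hrc hz.2⟩
      have hlt : (B.verts.filter fun y => B.rank c < B.rank y).card < n := by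
        rw [← hcard]
        refine Finset.card_lt_card ((Finset.ssubset_iff_of_subset hsub).mpr ?_)
        exact ⟨c, Finset.mem_filter.mpr ⟨hc, hrc⟩, fun h => by
          have := (Finset.mem_filter.mp h).2; omega⟩
      obtain ⟨w, hw⟩ := ih _ hlt c rfl hc hc1 hc2
      refine ⟨SimpleGraph.Walk.cons hadj w, ?_⟩
      intro z hz
      rw [SimpleGraph.Walk.support_cons, List.mem_cons] at hz
      rcases hz with rfl | hz
      · exact le_refl _
      · exact le_of_lt (lt_of_lt_of_le hrc (hw z hz))

lemma reach_core (B : Branch) (t₁ t₂ : ℕ) : ∀ n x, B.rank x = n → x ∈ B.verts →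
    x ≠ t₁ → x ≠ t₂ →
    (∃ w : B.graph.Walk x B.lf, ∀ z ∈ w.support, z ≠ t₁ ∧ z ≠ t₂) ∨
    (∃ r, (r = B.r₁ ∨ r = B.r₂) ∧ r ≠ t₁ ∧ r ≠ t₂ ∧
      ∃ w : B.graph.Walk x r, ∀ z ∈ w.support, z ≠ t₁ ∧ z ≠ t₂) := by
  intro n
  induction n using Nat.strong_induction_on with
  | _ n ih =>
    intro x hn hx hxt1 hxt2
    by_cases hroot : x = B.r₁ ∨ x = B.r₂
    · exact Or.inr ⟨x, hroot, hxt1, hxt2,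
        SimpleGraph.Walk.nil, by simp [hxt1, hxt2]⟩
    push_neg at hroot
    obtain ⟨h1, h2⟩ := hroot
    by_cases hlf : x = B.lf
    · subst hlf
      exact Or.inl ⟨SimpleGraph.Walk.nil, by simp [hxt1, hxt2]⟩
    have step : ∀ p, B.graph.Adj x p → B.rank p < B.rank x → p ∈ B.verts →
        p ≠ t₁ → p ≠ t₂ →
        (∃ w : B.graph.Walk x B.lf, ∀ z ∈ w.support, z ≠ t₁ ∧ z ≠ t₂) ∨
        (∃ r, (r = B.r₁ ∨ r = B.r₂) ∧ r ≠ t₁ ∧ r ≠ t₂ ∧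
          ∃ w : B.graph.Walk x r, ∀ z ∈ w.support, z ≠ t₁ ∧ z ≠ t₂) := by
      intro p hadj hrp hp hpt1 hpt2
      have := ih (B.rank p) (hn ▸ hrp) p rfl hp hpt1 hpt2
      rcases this with ⟨w, hw⟩ | ⟨r, hr, hrt1, hrt2, w, hw⟩
      · refine Or.inl ⟨SimpleGraph.Walk.cons hadj w, ?_⟩
        intro z hz
        rw [SimpleGraph.Walk.support_cons, List.mem_cons] at hz
        rcases hz with rfl | hz
        · exact ⟨hxt1, hxt2⟩
        · exact hw z hz
      · refine Or.inr ⟨r, hr, hrt1, hrt2, SimpleGraph.Walk.cons hadj w, ?_⟩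
        intro z hz
        rw [SimpleGraph.Walk.support_cons, List.mem_cons] at hz
        rcases hz with rfl | hz
        · exact ⟨hxt1, hxt2⟩
        · exact hw z hz
    by_cases hp1 : B.p₁ x ≠ t₁ ∧ B.p₁ x ≠ t₂
    · exact step _ (B.adj_parent₁_s8 hx h1 h2) (B.rank_lt₁ x hx h1 h2)
        (B.parent₁_mem x hx h1 h2) hp1.1 hp1.2
    by_cases hp2 : B.p₂ x ≠ t₁ ∧ B.p₂ x ≠ t₂
    · exact step _ (B.adj_parent₂_s8 hx h1 h2) (B.rank_lt₂ x hx h1 h2)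
        (B.parent₂_mem x hx h1 h2) hp2.1 hp2.2
    -- both parents removed
    push_neg at hp1 hp2
    have hne := B.parents_ne x hx h1 h2
    have hr1 := B.rank_lt₁ x hx h1 h2
    have hr2 := B.rank_lt₂ x hx h1 h2
    have hq1 : B.p₁ x = t₁ ∨ B.p₁ x = t₂ := by
      by_cases h : B.p₁ x = t₁
      · exact Or.inl h
      · exact Or.inr (hp1 h)
    have hq2 : B.p₂ x = t₁ ∨ B.p₂ x = t₂ := by
      by_cases h : B.p₂ x = t₁
      · exact Or.inl h
      · exact Or.inr (hp2 h)
    have ht : B.rank t₁ < B.rank x ∧ B.rank t₂ < B.rank x := by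
      rcases hq1 with e1 | e1 <;> rcases hq2 with e2 | e2
      · exact absurd (e1.trans e2.symm) hne
      · exact ⟨by rw [← e1]; exact hr1, by rw [← e2]; exact hr2⟩
      · exact ⟨by rw [← e2]; exact hr2, by rw [← e1]; exact hr1⟩
      · exact absurd (e1.trans e2.symm) hne
    obtain ⟨w, hw⟩ := ascend B _ x rfl hx h1 h2
    refine Or.inl ⟨w, fun z hz => ?_⟩
    have := hw z hz
    exact ⟨fun h => by rw [h] at this; omega, fun h => by rw [h] at this; omega⟩

end Branch

def BReach (B : Branch) (t₁ t₂ a b : ℕ) : Prop :=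
  ∃ w : B.graph.Walk a b, ∀ z ∈ w.support, z ≠ t₁ ∧ z ≠ t₂

lemma breach_refl (B : Branch) (t₁ t₂ a : ℕ) (h1 : a ≠ t₁) (h2 : a ≠ t₂) :
    BReach B t₁ t₂ a a := ⟨.nil, by simp [h1, h2]⟩

lemma BReach.symm {B : Branch} {t₁ t₂ a b : ℕ} (h : BReach B t₁ t₂ a b) :
    BReach B t₁ t₂ b a := by
  obtain ⟨w, hw⟩ := h
  exact ⟨w.reverse, fun z hz => hw z
    (by rwa [SimpleGraph.Walk.support_reverse, List.mem_reverse] at hz)⟩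

lemma BReach.trans {B : Branch} {t₁ t₂ a b c : ℕ} (h : BReach B t₁ t₂ a b)
    (h' : BReach B t₁ t₂ b c) : BReach B t₁ t₂ a c := by
  obtain ⟨w, hw⟩ := h; obtain ⟨w', hw'⟩ := h'
  refine ⟨w.append w', fun z hz => ?_⟩
  rw [SimpleGraph.Walk.mem_support_append_iff] at hz
  rcases hz with hz | hz
  · exact hw z hz
  · exact hw' z hz

lemma breach_of_mem_support {B : Branch} {t₁ t₂ a b : ℕ} (w : B.graph.Walk a b)
    (hw : ∀ z ∈ w.support, z ≠ t₁ ∧ z ≠ t₂) {z : ℕ} (hz : z ∈ w.support) :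
    BReach B t₁ t₂ a z ∧ BReach B t₁ t₂ z b :=
  ⟨⟨w.takeUntil z hz, fun u hu => hw u (w.support_takeUntil_subset hz hu)⟩,
   ⟨w.dropUntil z hz, fun u hu => hw u (w.support_dropUntil_subset hz hu)⟩⟩


/-- if removing two vertices `t₁, t₂` (neither of which is the
leaf, and at most one of which is a root) disconnects the branch, then the
remaining vertices split into exactly two connected pieces with no edges
between them, the leaf lying in one piece and every remaining root in the other. -/
theorem branch_removal_two_components (B : Branch) (t₁ t₂ : ℕ)
    (hv₁ : B.lf ≠ t₁) (hv₂ : B.lf ≠ t₂)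
    (hroots : ¬ ((B.r₁ = t₁ ∨ B.r₁ = t₂) ∧ (B.r₂ = t₁ ∨ B.r₂ = t₂)))
    (hdisc : ∃ x ∈ B.verts, ∃ y ∈ B.verts, x ≠ t₁ ∧ x ≠ t₂ ∧ y ≠ t₁ ∧ y ≠ t₂ ∧
      ¬ ∃ w : B.graph.Walk x y, t₁ ∉ w.support ∧ t₂ ∉ w.support) :
    ∃ A C : Finset ℕ, A.Nonempty ∧ C.Nonempty ∧ Disjoint A C ∧
      A ∪ C = B.verts \ {t₁, t₂} ∧
      (∀ a ∈ A, ∀ c ∈ C, ¬ B.graph.Adj a c) ∧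
      (∀ x ∈ A, ∀ y ∈ A, ∃ w : B.graph.Walk x y, ∀ z ∈ w.support, z ∈ A) ∧
      (∀ x ∈ C, ∀ y ∈ C, ∃ w : B.graph.Walk x y, ∀ z ∈ w.support, z ∈ C) ∧
      B.lf ∈ A ∧
      (B.r₁ ≠ t₁ → B.r₁ ≠ t₂ → B.r₁ ∈ C) ∧ (B.r₂ ≠ t₁ → B.r₂ ≠ t₂ → B.r₂ ∈ C) := by
  classical
  obtain ⟨x₀, hx₀v, y₀, hy₀v, hx₀1, hx₀2, hy₀1, hy₀2, hsep⟩ := hdisc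
  set S : Finset ℕ := B.verts \ {t₁, t₂} with hS
  have memS : ∀ {z : ℕ}, z ∈ S ↔ z ∈ B.verts ∧ z ≠ t₁ ∧ z ≠ t₂ := by
    intro z; simp [hS, not_or]
  set A : Finset ℕ := S.filter (fun z => BReach B t₁ t₂ z B.lf) with hA
  set C : Finset ℕ := S \ A with hC
  have memA : ∀ {z : ℕ}, z ∈ A ↔ z ∈ S ∧ BReach B t₁ t₂ z B.lf := fun {z} =>
    Finset.mem_filter
  have memC : ∀ {z : ℕ}, z ∈ C ↔ z ∈ S ∧ z ∉ A := fun {z} => Finset.mem_sdiff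
  have claim1 : ∀ z ∈ S, BReach B t₁ t₂ z B.lf ∨
      ∃ r, (r = B.r₁ ∨ r = B.r₂) ∧ r ∈ S ∧ BReach B t₁ t₂ z r := by
    intro z hz
    obtain ⟨hzv, hz1, hz2⟩ := memS.mp hz
    rcases B.reach_core t₁ t₂ _ z rfl hzv hz1 hz2 with h | ⟨r, hr, hr1, hr2, w, hw⟩
    · exact Or.inl h
    · refine Or.inr ⟨r, hr, memS.mpr ⟨?_, hr1, hr2⟩, ⟨w, hw⟩⟩
      rcases hr with rfl | rfl
      · exact B.r₁_mem
      · exact B.r₂_mem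
  have rootAdj : ∀ a b : ℕ, (a = B.r₁ ∨ a = B.r₂) → (b = B.r₁ ∨ b = B.r₂) → a ≠ b →
      B.graph.Adj a b := by
    rintro a b (rfl | rfl) (rfl | rfl) hne
    · exact absurd rfl hne
    · exact B.adj_roots_s8
    · exact B.adj_roots_s8.symm
    · exact absurd rfl hne
  have rootReach : ∀ r r' : ℕ, (r = B.r₁ ∨ r = B.r₂) → (r' = B.r₁ ∨ r' = B.r₂) →
      r ∈ S → r' ∈ S → BReach B t₁ t₂ r r' := by
    intro r r' hr hr' hrS hr'S
    obtain ⟨-, h1, h2⟩ := memS.mp hrS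
    obtain ⟨-, h1', h2'⟩ := memS.mp hr'S
    by_cases he : r = r'
    · subst he; exact breach_refl _ _ _ _ h1 h2
    · refine ⟨SimpleGraph.Walk.cons (rootAdj r r' hr hr' he) .nil, ?_⟩
      intro z hz
      simp only [SimpleGraph.Walk.support_cons, SimpleGraph.Walk.support_nil,
        List.mem_cons, List.mem_singleton, List.not_mem_nil] at hz
      rcases hz with rfl | rfl | h
      · exact ⟨h1, h2⟩
      · exact ⟨h1', h2'⟩
      · exact h.elim
  have rootsNotA : ∀ r, (r = B.r₁ ∨ r = B.r₂) → r ∈ S → ¬ BReach B t₁ t₂ r B.lf := by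
    intro r hr hrS hrA
    have hall : ∀ z ∈ S, BReach B t₁ t₂ z B.lf := by
      intro z hz
      rcases claim1 z hz with h | ⟨r', hr', hr'S, h⟩
      · exact h
      · exact h.trans ((rootReach r' r hr' hr hr'S hrS).trans hrA)
    have hxy : BReach B t₁ t₂ x₀ y₀ :=
      (hall x₀ (memS.mpr ⟨hx₀v, hx₀1, hx₀2⟩)).trans
        (hall y₀ (memS.mpr ⟨hy₀v, hy₀1, hy₀2⟩)).symm
    obtain ⟨w, hw⟩ := hxy
    exact hsep ⟨w, fun h => (hw t₁ h).1 rfl, fun h => (hw t₂ h).2 rfl⟩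
  have suppS : ∀ {a b : ℕ} (w : B.graph.Walk a b), a ∈ B.verts →
      (∀ z ∈ w.support, z ≠ t₁ ∧ z ≠ t₂) → ∀ z ∈ w.support, z ∈ S := by
    intro a b w ha hw z hz
    exact memS.mpr ⟨B.walk_support_mem ha w z hz, hw z hz⟩
  have connA : ∀ x ∈ A, ∀ y ∈ A, ∃ w : B.graph.Walk x y, ∀ z ∈ w.support, z ∈ A := by
    intro x hx y hy
    obtain ⟨hxS, wx, hwx⟩ := memA.mp hx
    obtain ⟨hyS, wy, hwy⟩ := memA.mp hy
    refine ⟨wx.append wy.reverse, ?_⟩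
    intro z hz
    rw [SimpleGraph.Walk.mem_support_append_iff] at hz
    have hz' : z ∈ wx.support ∨ z ∈ wy.support := by
      rcases hz with hz | hz
      · exact Or.inl hz
      · exact Or.inr (by rwa [SimpleGraph.Walk.support_reverse, List.mem_reverse] at hz)
    rcases hz' with hz' | hz'
    · exact memA.mpr ⟨suppS wx (memS.mp hxS).1 hwx z hz',
        (breach_of_mem_support wx hwx hz').2⟩
    · exact memA.mpr ⟨suppS wy (memS.mp hyS).1 hwy z hz',
        (breach_of_mem_support wy hwy hz').2⟩
  have reachRootC : ∀ x ∈ C, ∃ r, (r = B.r₁ ∨ r = B.r₂) ∧ r ∈ C ∧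
      ∃ w : B.graph.Walk x r, ∀ z ∈ w.support, z ∈ C := by
    intro x hx
    obtain ⟨hxS, hxnA⟩ := memC.mp hx
    have hnl : ¬ BReach B t₁ t₂ x B.lf := fun h => hxnA (memA.mpr ⟨hxS, h⟩)
    rcases claim1 x hxS with h | ⟨r, hr, hrS, w, hw⟩
    · exact absurd h hnl
    have hsupp : ∀ z ∈ w.support, z ∈ C := by
      intro z hz
      have hzS := suppS w (memS.mp hxS).1 hw z hz
      refine memC.mpr ⟨hzS, fun hzA => hnl ?_⟩
      exact (breach_of_mem_support w hw hz).1.trans (memA.mp hzA).2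
    exact ⟨r, hr, hsupp r w.end_mem_support, w, hsupp⟩
  have connC : ∀ x ∈ C, ∀ y ∈ C, ∃ w : B.graph.Walk x y, ∀ z ∈ w.support, z ∈ C := by
    intro x hx y hy
    obtain ⟨rx, hrx, hrxC, wx, hwx⟩ := reachRootC x hx
    obtain ⟨ry, hry, hryC, wy, hwy⟩ := reachRootC y hy
    have bridge : ∃ wb : B.graph.Walk rx ry, ∀ z ∈ wb.support, z ∈ C := by
      by_cases he : rx = ry
      · subst he; exact ⟨.nil, by simpa using hrxC⟩
      · refine ⟨.cons (rootAdj rx ry hrx hry he) .nil, ?_⟩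
        intro z hz
        simp only [SimpleGraph.Walk.support_cons, SimpleGraph.Walk.support_nil,
          List.mem_cons, List.not_mem_nil] at hz
        rcases hz with rfl | rfl | h
        · exact hrxC
        · exact hryC
        · exact h.elim
    obtain ⟨wb, hwb⟩ := bridge
    refine ⟨wx.append (wb.append wy.reverse), ?_⟩
    intro z hz
    rw [SimpleGraph.Walk.mem_support_append_iff,
      SimpleGraph.Walk.mem_support_append_iff] at hz
    rcases hz with hz | hz | hz
    · exact hwx z hz
    · exact hwb z hz
    · exact hwy z (by rwa [SimpleGraph.Walk.support_reverse, List.mem_reverse] at hz)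
  have hlfS : B.lf ∈ S := memS.mpr ⟨B.leaf_mem, hv₁, hv₂⟩
  have hlfA : B.lf ∈ A := memA.mpr ⟨hlfS, breach_refl _ _ _ _ hv₁ hv₂⟩
  have rootsC : ∀ r, (r = B.r₁ ∨ r = B.r₂) → r ≠ t₁ → r ≠ t₂ → r ∈ C := by
    intro r hr h1 h2
    have hrS : r ∈ S := memS.mpr
      ⟨by rcases hr with rfl | rfl; exacts [B.r₁_mem, B.r₂_mem], h1, h2⟩
    exact memC.mpr ⟨hrS, fun hAr => rootsNotA r hr hrS (memA.mp hAr).2⟩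
  have hCne : C.Nonempty := by
    rcases not_and_or.mp hroots with h | h <;> push_neg at h
    · exact ⟨B.r₁, rootsC B.r₁ (Or.inl rfl) h.1 h.2⟩
    · exact ⟨B.r₂, rootsC B.r₂ (Or.inr rfl) h.1 h.2⟩
  refine ⟨A, C, ⟨B.lf, hlfA⟩, hCne, Finset.disjoint_sdiff, ?_, ?_, connA, connC, hlfA,
    fun h1 h2 => rootsC B.r₁ (Or.inl rfl) h1 h2,
    fun h1 h2 => rootsC B.r₂ (Or.inr rfl) h1 h2⟩
  · exact Finset.union_sdiff_of_subset (Finset.filter_subset _ _)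
  · intro a ha c hc hadj
    obtain ⟨hcS, hcnA⟩ := memC.mp hc
    obtain ⟨haS, hra⟩ := memA.mp ha
    have hreach : BReach B t₁ t₂ c B.lf := by
      refine BReach.trans ⟨SimpleGraph.Walk.cons hadj.symm .nil, ?_⟩ hra
      intro z hz
      simp only [SimpleGraph.Walk.support_cons, SimpleGraph.Walk.support_nil,
        List.mem_cons, List.not_mem_nil] at hz
      rcases hz with rfl | rfl | h
      · exact (memS.mp hcS).2
      · exact (memS.mp haS).2
      · exact h.elim
    exact hcnA (memA.mpr ⟨hcS, hreach⟩)
end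

section
/- Let B(v) = (V_B, E_B) be a branch and let G be obtained by adding a new vertex q and edges (q, v), (q, r₁), (q, r₂). Then |E_G| = 2|V_G| - 2 and for every proper subset X of V_G with |X| ≥ 2, |E[X]| ≤ 2|X| - 3; that is, G is an M-circuit. -/
/-- The vertex set of the graph `G` obtained from the branch `B` by adding a
new vertex `q`. -/
def extVerts (B : Branch) (q : ℕ) : Finset ℕ := insert q B.verts

/-- The edge set of the graph `G` obtained from the branch `B` by adding a new
vertex `q` together with the three edges `(q,v)`, `(q,r₁)`, `(q,r₂)`. -/
def extEdges (B : Branch) (q : ℕ) : Finset (Sym2 ℕ) :=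
  insert s(q, B.lf) (insert s(q, B.r₁) (insert s(q, B.r₂) B.edges))

/-- The extended graph as a simple graph on `ℕ`. -/
def extGraph (B : Branch) (q : ℕ) : SimpleGraph ℕ :=
  SimpleGraph.fromEdgeSet (extEdges B q : Set (Sym2 ℕ))

namespace BranchAux
open Finset

variable (B : Branch)

def Nset (B : Branch) : Finset ℕ := B.verts.filter (fun x => x ≠ B.r₁ ∧ x ≠ B.r₂)

def pe (B : Branch) (x : ℕ) : Finset (Sym2 ℕ) := {s(x, B.p₁ x), s(x, B.p₂ x)}

lemma mem_Nset {x : ℕ} : x ∈ Nset B ↔ x ∈ B.verts ∧ x ≠ B.r₁ ∧ x ≠ B.r₂ := by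
  simp [Nset]

lemma mem_pe {x : ℕ} {e : Sym2 ℕ} : e ∈ pe B x ↔ e = s(x, B.p₁ x) ∨ e = s(x, B.p₂ x) := by
  simp [pe]

lemma edges_eq : B.edges = insert s(B.r₁, B.r₂) ((Nset B).biUnion (pe B)) := rfl

lemma mem_edges {e : Sym2 ℕ} :
    e ∈ B.edges ↔ e = s(B.r₁, B.r₂) ∨ ∃ x ∈ Nset B, e = s(x, B.p₁ x) ∨ e = s(x, B.p₂ x) := by
  rw [edges_eq]
  simp [Finset.mem_insert, Finset.mem_biUnion, mem_pe]

lemma p₁_mem {x : ℕ} (hx : x ∈ Nset B) : B.p₁ x ∈ B.verts := by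
  rw [mem_Nset] at hx; exact B.parent₁_mem x hx.1 hx.2.1 hx.2.2

lemma p₂_mem {x : ℕ} (hx : x ∈ Nset B) : B.p₂ x ∈ B.verts := by
  rw [mem_Nset] at hx; exact B.parent₂_mem x hx.1 hx.2.1 hx.2.2

lemma parents_ne' {x : ℕ} (hx : x ∈ Nset B) : B.p₁ x ≠ B.p₂ x := by
  rw [mem_Nset] at hx; exact B.parents_ne x hx.1 hx.2.1 hx.2.2

lemma parent_rank {x p : ℕ} (hx : x ∈ Nset B) (h : B.p₁ x = p ∨ B.p₂ x = p) :
    B.rank p < B.rank x := by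
  rw [mem_Nset] at hx
  rcases h with h | h
  · exact h ▸ B.rank_lt₁ x hx.1 hx.2.1 hx.2.2
  · exact h ▸ B.rank_lt₂ x hx.1 hx.2.1 hx.2.2

lemma not_mem_edges {a b : ℕ} (ha : a ∉ B.verts) : s(a, b) ∉ B.edges := by
  intro h
  rw [mem_edges] at h
  rcases h with h | ⟨x, hx, h | h⟩ <;> rw [Sym2.eq_iff] at h <;>
    rcases h with ⟨h1, h2⟩ | ⟨h1, h2⟩ <;> subst h1
  exacts [ha B.r₁_mem, ha B.r₂_mem, ha ((mem_Nset B).1 hx).1, ha (p₁_mem B hx),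
    ha ((mem_Nset B).1 hx).1, ha (p₂_mem B hx)]

lemma edge_mem_verts {a b : ℕ} (h : s(a, b) ∈ B.edges) : a ∈ B.verts ∧ b ∈ B.verts := by
  constructor
  · by_contra ha; exact not_mem_edges B ha h
  · by_contra hb
    rw [Sym2.eq_swap] at h
    exact not_mem_edges B hb h

lemma no_loop {a : ℕ} : s(a, a) ∉ B.edges := by
  intro h
  rw [mem_edges] at h
  rcases h with h | ⟨x, hx, h | h⟩ <;> rw [Sym2.eq_iff] at h
  · rcases h with ⟨h1, h2⟩ | ⟨h1, h2⟩ <;> exact B.root_ne (by omega)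
  · rcases h with ⟨h1, h2⟩ | ⟨h1, h2⟩
    · exact absurd (parent_rank B hx (Or.inl (h2.symm.trans h1))) (lt_irrefl _)
    · exact absurd (parent_rank B hx (Or.inl (h1.symm.trans h2))) (lt_irrefl _)
  · rcases h with ⟨h1, h2⟩ | ⟨h1, h2⟩
    · exact absurd (parent_rank B hx (Or.inr (h2.symm.trans h1))) (lt_irrefl _)
    · exact absurd (parent_rank B hx (Or.inr (h1.symm.trans h2))) (lt_irrefl _)

lemma pe_card {x : ℕ} (hx : x ∈ Nset B) : (pe B x).card = 2 := by
  rw [pe, card_insert_of_notMem, card_singleton]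
  rw [mem_singleton]
  intro h
  rw [Sym2.eq_iff] at h
  rcases h with ⟨-, h⟩ | ⟨h1, h2⟩
  · exact parents_ne' B hx h
  · exact absurd (parent_rank B hx (Or.inl h2)) (lt_irrefl _)

lemma pe_disjoint {x y : ℕ} (hx : x ∈ Nset B) (hy : y ∈ Nset B) (hxy : x ≠ y) :
    Disjoint (pe B x) (pe B y) := by
  rw [Finset.disjoint_left]
  intro e hex hey
  rw [mem_pe] at hex hey
  have h : ∃ p, (B.p₁ x = p ∨ B.p₂ x = p) ∧ e = s(x, p) := by
    rcases hex with rfl | rfl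
    exacts [⟨_, Or.inl rfl, rfl⟩, ⟨_, Or.inr rfl, rfl⟩]
  obtain ⟨p, hp, rfl⟩ := h
  have h2 : ∃ p', (B.p₁ y = p' ∨ B.p₂ y = p') ∧ s(x, p) = s(y, p') := by
    rcases hey with h | h
    exacts [⟨_, Or.inl rfl, h⟩, ⟨_, Or.inr rfl, h⟩]
  obtain ⟨p', hp', heq⟩ := h2
  rw [Sym2.eq_iff] at heq
  rcases heq with ⟨h1, -⟩ | ⟨h1, h2⟩
  · exact hxy h1
  · have ha := parent_rank B hx hp
    have hb := parent_rank B hy hp'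
    rw [h2] at ha
    rw [← h1] at hb
    omega

lemma root_notin_biUnion : s(B.r₁, B.r₂) ∉ (Nset B).biUnion (pe B) := by
  intro h
  rw [mem_biUnion] at h
  obtain ⟨x, hx, he⟩ := h
  rw [mem_pe] at he
  have hxN := (mem_Nset B).1 hx
  rcases he with h | h <;> rw [Sym2.eq_iff] at h <;>
    rcases h with ⟨h1, -⟩ | ⟨-, h2⟩
  exacts [hxN.2.1 h1.symm, hxN.2.2 h2.symm, hxN.2.1 h1.symm, hxN.2.2 h2.symm]

lemma edges_card : B.edges.card = 2 * (Nset B).card + 1 := by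
  rw [edges_eq, card_insert_of_notMem (root_notin_biUnion B),
    card_biUnion (fun x hx y hy h => pe_disjoint B hx hy h)]
  rw [Finset.sum_congr rfl (fun x hx => pe_card B hx), Finset.sum_const, smul_eq_mul]
  ring

lemma verts_card : B.verts.card = (Nset B).card + 2 := by
  have hv : B.verts = insert B.r₁ (insert B.r₂ (Nset B)) := by
    ext x
    simp only [mem_insert, mem_Nset]
    constructor
    · intro h
      by_cases h1 : x = B.r₁
      · exact Or.inl h1
      by_cases h2 : x = B.r₂
      · exact Or.inr (Or.inl h2)
      exact Or.inr (Or.inr ⟨h, h1, h2⟩)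
    · rintro (rfl | rfl | ⟨h, -, -⟩)
      exacts [B.r₁_mem, B.r₂_mem, h]
  have hr₂ : B.r₂ ∉ Nset B := by
    rw [mem_Nset]; rintro ⟨-, -, h⟩; exact h rfl
  have hr₁ : B.r₁ ∉ insert B.r₂ (Nset B) := by
    rw [mem_insert, mem_Nset]
    rintro (h | ⟨-, h, -⟩)
    exacts [B.root_ne h, h rfl]
  rw [hv, card_insert_of_notMem hr₁, card_insert_of_notMem hr₂]

lemma sum_special₁ {S : Finset ℕ} {f : ℕ → ℕ} {c : ℕ} (hc : c ∈ S)
    (h2 : ∀ x ∈ S, f x ≤ 2) (h1 : f c ≤ 1) :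
    ∑ x ∈ S, f x + 1 ≤ 2 * S.card := by
  rw [← Finset.add_sum_erase S f hc]
  have hs : ∑ x ∈ S.erase c, f x ≤ (S.erase c).card * 2 := by
    simpa using Finset.sum_le_card_nsmul (S.erase c) f 2 (fun x hx => h2 x (mem_of_mem_erase hx))
  have hcard := card_erase_of_mem hc
  have hpos : 1 ≤ S.card := card_pos.2 ⟨c, hc⟩
  omega

lemma sum_special₂ {S : Finset ℕ} {f : ℕ → ℕ} {c₁ c₂ : ℕ} (hc₁ : c₁ ∈ S) (hc₂ : c₂ ∈ S)
    (hne : c₂ ≠ c₁) (h2 : ∀ x ∈ S, f x ≤ 2) (h0 : f c₁ = 0) (h1 : f c₂ ≤ 1) :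
    ∑ x ∈ S, f x + 3 ≤ 2 * S.card := by
  have hc₂' : c₂ ∈ S.erase c₁ := mem_erase.2 ⟨hne, hc₂⟩
  rw [← Finset.add_sum_erase S f hc₁, ← Finset.add_sum_erase _ f hc₂']
  have hs : ∑ x ∈ (S.erase c₁).erase c₂, f x ≤ ((S.erase c₁).erase c₂).card * 2 := by
    simpa using Finset.sum_le_card_nsmul ((S.erase c₁).erase c₂) f 2
      (fun x hx => h2 x (mem_of_mem_erase (mem_of_mem_erase hx)))
  have ha := card_erase_of_mem hc₁
  have hb := card_erase_of_mem hc₂'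
  have hpos : 2 ≤ S.card := Finset.one_lt_card.2 ⟨c₁, hc₁, c₂, hc₂, hne.symm⟩
  omega

lemma cover {X : Finset ℕ} {e : Sym2 ℕ} (he : e ∈ B.edges ∩ X.sym2) :
    e = s(B.r₁, B.r₂) ∧ B.r₁ ∈ X ∧ B.r₂ ∈ X ∨
      e ∈ (Nset B ∩ X).biUnion (fun x => pe B x ∩ X.sym2) := by
  rw [mem_inter] at he
  obtain ⟨h1, h2⟩ := he
  rw [mem_edges] at h1
  rcases h1 with rfl | ⟨x, hx, hfe⟩
  · rw [Finset.mk_mem_sym2_iff] at h2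
    exact Or.inl ⟨rfl, h2.1, h2.2⟩
  · refine Or.inr (mem_biUnion.2 ⟨x, ?_, ?_⟩)
    · rw [mem_inter]
      refine ⟨hx, ?_⟩
      rcases hfe with rfl | rfl <;> rw [Finset.mk_mem_sym2_iff] at h2 <;> exact h2.1
    · rw [mem_inter]
      exact ⟨(mem_pe B).2 hfe, h2⟩

lemma card_bound₁ (X : Finset ℕ) :
    (B.edges ∩ X.sym2).card ≤ 1 + ∑ x ∈ Nset B ∩ X, (pe B x ∩ X.sym2).card := by
  have hsub : B.edges ∩ X.sym2 ⊆
      insert s(B.r₁, B.r₂) ((Nset B ∩ X).biUnion fun x => pe B x ∩ X.sym2) := by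
    intro e he
    rcases cover B he with ⟨rfl, -, -⟩ | h
    exacts [mem_insert_self _ _, mem_insert_of_mem h]
  have h1 := card_le_card hsub
  have h2 := card_insert_le s(B.r₁, B.r₂) ((Nset B ∩ X).biUnion fun x => pe B x ∩ X.sym2)
  have h3 := card_biUnion_le (s := Nset B ∩ X) (t := fun x => pe B x ∩ X.sym2)
  omega

lemma card_bound₀ {X : Finset ℕ} (h : B.r₁ ∉ X ∨ B.r₂ ∉ X) :
    (B.edges ∩ X.sym2).card ≤ ∑ x ∈ Nset B ∩ X, (pe B x ∩ X.sym2).card := by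
  have hsub : B.edges ∩ X.sym2 ⊆ (Nset B ∩ X).biUnion fun x => pe B x ∩ X.sym2 := by
    intro e he
    rcases cover B he with ⟨-, h1, h2⟩ | hh
    · rcases h with h | h
      exacts [absurd h1 h, absurd h2 h]
    · exact hh
  exact le_trans (card_le_card hsub) card_biUnion_le

lemma term_le_two (x : ℕ) (X : Finset ℕ) : (pe B x ∩ X.sym2).card ≤ 2 := by
  refine le_trans (card_le_card inter_subset_left) ?_
  refine le_trans (card_insert_le _ _) ?_
  simp

lemma term_le_one {x : ℕ} {X : Finset ℕ} (h : B.p₁ x ∉ X ∨ B.p₂ x ∉ X) :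
    (pe B x ∩ X.sym2).card ≤ 1 := by
  rcases h with h | h
  · have hsub : pe B x ∩ X.sym2 ⊆ {s(x, B.p₂ x)} := by
      intro e he
      rw [mem_inter, mem_pe] at he
      rcases he with ⟨rfl | rfl, h2⟩
      · rw [Finset.mk_mem_sym2_iff] at h2
        exact absurd h2.2 h
      · exact mem_singleton_self _
    simpa using card_le_card hsub
  · have hsub : pe B x ∩ X.sym2 ⊆ {s(x, B.p₁ x)} := by
      intro e he
      rw [mem_inter, mem_pe] at he
      rcases he with ⟨rfl | rfl, h2⟩
      · exact mem_singleton_self _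
      · rw [Finset.mk_mem_sym2_iff] at h2
        exact absurd h2.2 h
    simpa using card_le_card hsub

lemma term_zero {x : ℕ} {X : Finset ℕ} (h1 : B.p₁ x ∉ X) (h2 : B.p₂ x ∉ X) :
    (pe B x ∩ X.sym2).card = 0 := by
  rw [card_eq_zero, eq_empty_iff_forall_notMem]
  intro e he
  rw [mem_inter, mem_pe] at he
  rcases he with ⟨rfl | rfl, hX⟩ <;> rw [Finset.mk_mem_sym2_iff] at hX
  exacts [h1 hX.2, h2 hX.2]

lemma NX_card {X : Finset ℕ} (hXV : X ⊆ B.verts) (h1 : B.r₁ ∈ X) (h2 : B.r₂ ∈ X) :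
    (Nset B ∩ X).card + 2 = X.card := by
  have heq : Nset B ∩ X = X \ {B.r₁, B.r₂} := by
    ext x
    simp only [mem_inter, mem_Nset, mem_sdiff, mem_insert, mem_singleton]
    constructor
    · rintro ⟨⟨-, ha, hb⟩, hX⟩
      exact ⟨hX, by tauto⟩
    · rintro ⟨hX, h⟩
      push_neg at h
      exact ⟨⟨hXV hX, h.1, h.2⟩, hX⟩
  have hsub : ({B.r₁, B.r₂} : Finset ℕ) ⊆ X := by
    intro x hx
    rw [mem_insert, mem_singleton] at hx
    rcases hx with rfl | rfl <;> assumption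
  have hc2 : ({B.r₁, B.r₂} : Finset ℕ).card = 2 := card_pair B.root_ne
  have ha := card_sdiff_of_subset hsub
  have hb := card_le_card hsub
  rw [heq]
  omega

lemma laman (X : Finset ℕ) (hXV : X ⊆ B.verts) (hX2 : 2 ≤ X.card) :
    (B.edges ∩ X.sym2).card + 3 ≤ 2 * X.card := by
  by_cases h1 : B.r₁ ∈ X <;> by_cases h2 : B.r₂ ∈ X
  · -- both roots in X
    have hb := card_bound₁ B X
    have hs : ∑ x ∈ Nset B ∩ X, (pe B x ∩ X.sym2).card ≤ (Nset B ∩ X).card * 2 := by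
      simpa using Finset.sum_le_card_nsmul (Nset B ∩ X) _ 2 (fun x _ => term_le_two B x X)
    have hc := NX_card B hXV h1 h2
    omega
  · -- r₁ ∈ X, r₂ ∉ X
    have heq : Nset B ∩ X = X.erase B.r₁ := by
      ext x
      simp only [mem_inter, mem_Nset, mem_erase]
      constructor
      · rintro ⟨⟨-, ha, -⟩, hX⟩
        exact ⟨ha, hX⟩
      · rintro ⟨ha, hX⟩
        exact ⟨⟨hXV hX, ha, fun h => h2 (h ▸ hX)⟩, hX⟩
    have hScard : (Nset B ∩ X).card + 1 = X.card := by
      rw [heq, card_erase_of_mem h1]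
      omega
    have hne : (Nset B ∩ X).Nonempty := card_pos.1 (by omega)
    obtain ⟨m, hm, hmin⟩ := Finset.exists_min_image (Nset B ∩ X) B.rank hne
    have hmN : m ∈ Nset B := (mem_inter.1 hm).1
    have hterm : B.p₁ m ∉ X ∨ B.p₂ m ∉ X := by
      by_contra hc
      push_neg at hc
      have key : ∀ p, (B.p₁ m = p ∨ B.p₂ m = p) → p ∈ X → p = B.r₁ := by
        intro p hp hpX
        by_contra hpr
        by_cases hpr2 : p = B.r₂
        · exact h2 (hpr2 ▸ hpX)
        · have hpS : p ∈ Nset B ∩ X :=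
            mem_inter.2 ⟨(mem_Nset B).2 ⟨hXV hpX, hpr, hpr2⟩, hpX⟩
          have hmn := hmin p hpS
          have hpr' := parent_rank B hmN hp
          omega
      have e1 := key _ (Or.inl rfl) hc.1
      have e2 := key _ (Or.inr rfl) hc.2
      exact parents_ne' B hmN (e1.trans e2.symm)
    have hb := card_bound₀ B (Or.inr h2)
    have hsum := sum_special₁ hm (fun x _ => term_le_two B x X) (term_le_one B hterm)
    omega
  · -- r₂ ∈ X, r₁ ∉ X
    have heq : Nset B ∩ X = X.erase B.r₂ := by
      ext x
      simp only [mem_inter, mem_Nset, mem_erase]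
      constructor
      · rintro ⟨⟨-, -, ha⟩, hX⟩
        exact ⟨ha, hX⟩
      · rintro ⟨ha, hX⟩
        exact ⟨⟨hXV hX, fun h => h1 (h ▸ hX), ha⟩, hX⟩
    have hScard : (Nset B ∩ X).card + 1 = X.card := by
      rw [heq, card_erase_of_mem h2]
      omega
    have hne : (Nset B ∩ X).Nonempty := card_pos.1 (by omega)
    obtain ⟨m, hm, hmin⟩ := Finset.exists_min_image (Nset B ∩ X) B.rank hne
    have hmN : m ∈ Nset B := (mem_inter.1 hm).1
    have hterm : B.p₁ m ∉ X ∨ B.p₂ m ∉ X := by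
      by_contra hc
      push_neg at hc
      have key : ∀ p, (B.p₁ m = p ∨ B.p₂ m = p) → p ∈ X → p = B.r₂ := by
        intro p hp hpX
        by_contra hpr
        by_cases hpr1 : p = B.r₁
        · exact h1 (hpr1 ▸ hpX)
        · have hpS : p ∈ Nset B ∩ X :=
            mem_inter.2 ⟨(mem_Nset B).2 ⟨hXV hpX, hpr1, hpr⟩, hpX⟩
          have hmn := hmin p hpS
          have hpr' := parent_rank B hmN hp
          omega
      have e1 := key _ (Or.inl rfl) hc.1
      have e2 := key _ (Or.inr rfl) hc.2
      exact parents_ne' B hmN (e1.trans e2.symm)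
    have hb := card_bound₀ B (Or.inl h1)
    have hsum := sum_special₁ hm (fun x _ => term_le_two B x X) (term_le_one B hterm)
    omega
  · -- neither root in X
    have heq : Nset B ∩ X = X := by
      ext x
      simp only [mem_inter, mem_Nset]
      constructor
      · rintro ⟨-, hX⟩
        exact hX
      · intro hX
        exact ⟨⟨hXV hX, fun h => h1 (h ▸ hX), fun h => h2 (h ▸ hX)⟩, hX⟩
    have hScard : (Nset B ∩ X).card = X.card := by rw [heq]
    obtain ⟨m, hm, hmin⟩ := Finset.exists_min_image (Nset B ∩ X) B.rank
      (card_pos.1 (by omega))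
    have hmN : m ∈ Nset B := (mem_inter.1 hm).1
    have ht0 : (pe B m ∩ X.sym2).card = 0 := by
      have key : ∀ p, (B.p₁ m = p ∨ B.p₂ m = p) → p ∉ X := by
        intro p hp hpX
        have hpS : p ∈ Nset B ∩ X := by rw [heq]; exact hpX
        have hmn := hmin p hpS
        have hpr := parent_rank B hmN hp
        omega
      exact term_zero B (key _ (Or.inl rfl)) (key _ (Or.inr rfl))
    have hne₂ : ((Nset B ∩ X).erase m).Nonempty := by
      rw [← card_pos, card_erase_of_mem hm]
      omega
    obtain ⟨m₂, hm₂, hmin₂⟩ := Finset.exists_min_image ((Nset B ∩ X).erase m) B.rank hne₂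
    have hm₂S : m₂ ∈ Nset B ∩ X := mem_of_mem_erase hm₂
    have hm₂N : m₂ ∈ Nset B := (mem_inter.1 hm₂S).1
    have hm₂ne : m₂ ≠ m := (mem_erase.1 hm₂).1
    have ht1 : (pe B m₂ ∩ X.sym2).card ≤ 1 := by
      apply term_le_one B
      by_contra hc
      push_neg at hc
      have key : ∀ p, (B.p₁ m₂ = p ∨ B.p₂ m₂ = p) → p ∈ X → p = m := by
        intro p hp hpX
        by_contra hpm
        have hpS : p ∈ (Nset B ∩ X).erase m := by
          rw [mem_erase]
          refine ⟨hpm, ?_⟩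
          rw [heq]
          exact hpX
        have hmn := hmin₂ p hpS
        have hpr := parent_rank B hm₂N hp
        omega
      have e1 := key _ (Or.inl rfl) hc.1
      have e2 := key _ (Or.inr rfl) hc.2
      exact parents_ne' B hm₂N (e1.trans e2.symm)
    have hb := card_bound₀ B (Or.inl h1)
    have hsum := sum_special₂ hm hm₂S hm₂ne (fun x _ => term_le_two B x X) ht0 ht1
    omega

lemma branch_lemma (X : Finset ℕ) (hXV : X ⊂ B.verts) (h1 : B.r₁ ∈ X) (h2 : B.r₂ ∈ X)
    (hlf : B.lf ∈ X) :
    (B.edges ∩ X.sym2).card + 4 ≤ 2 * X.card := by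
  obtain ⟨y0, hy0v, hy0X⟩ := Finset.exists_of_ssubset hXV
  obtain ⟨y, hy, hmax⟩ := Finset.exists_max_image (B.verts \ X) B.rank
    ⟨y0, mem_sdiff.2 ⟨hy0v, hy0X⟩⟩
  rw [mem_sdiff] at hy
  have hyr₁ : y ≠ B.r₁ := fun h => hy.2 (h ▸ h1)
  have hyr₂ : y ≠ B.r₂ := fun h => hy.2 (h ▸ h2)
  have hylf : y ≠ B.lf := fun h => hy.2 (h ▸ hlf)
  obtain ⟨c, hcv, hcr₁, hcr₂, hcp⟩ := B.has_child y hy.1 hyr₁ hyr₂ hylf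
  have hcN : c ∈ Nset B := (mem_Nset B).2 ⟨hcv, hcr₁, hcr₂⟩
  have hrank : B.rank y < B.rank c := parent_rank B hcN hcp
  have hcX : c ∈ X := by
    by_contra hcX
    have hmem : c ∈ B.verts \ X := mem_sdiff.2 ⟨hcv, hcX⟩
    have := hmax c hmem
    omega
  have hterm : B.p₁ c ∉ X ∨ B.p₂ c ∉ X := by
    rcases hcp with h | h
    · exact Or.inl (fun hx => hy.2 (h ▸ hx))
    · exact Or.inr (fun hx => hy.2 (h ▸ hx))
  have hb := card_bound₁ B X
  have hsum := sum_special₁ (mem_inter.2 ⟨hcN, hcX⟩)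
    (fun x _ => term_le_two B x X) (term_le_one B hterm)
  have hc := NX_card B hXV.subset h1 h2
  omega

lemma edge_sym2_mono {X X' : Finset ℕ} (hm : ∀ v ∈ B.verts, v ∈ X → v ∈ X') :
    ∀ e ∈ B.edges, e ∈ X.sym2 → e ∈ X'.sym2 := by
  intro e
  induction e using Sym2.ind with
  | _ a b =>
    intro he heX
    rw [Finset.mk_mem_sym2_iff] at heX ⊢
    obtain ⟨ha, hb⟩ := edge_mem_verts B he
    exact ⟨hm a ha heX.1, hm b hb heX.2⟩

lemma small_inter {X' : Finset ℕ} (h : X'.card ≤ 1) : B.edges ∩ X'.sym2 = ∅ := by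
  rw [eq_empty_iff_forall_notMem]
  intro e
  induction e using Sym2.ind with
  | _ a b =>
    intro he
    rw [mem_inter, Finset.mk_mem_sym2_iff] at he
    obtain ⟨he, ha, hb⟩ := he
    have hab : a = b := Finset.card_le_one.1 h a ha b hb
    exact no_loop B (hab ▸ he)

lemma triple_bound {a b c : ℕ} (w : ℕ) {X' : Finset ℕ} (hw : w ∈ ({a, b, c} : Finset ℕ))
    (hwX : w ∉ X') : (({a, b, c} : Finset ℕ) ∩ X').card ≤ 2 := by
  have hsub : ({a, b, c} : Finset ℕ) ∩ X' ⊆ ({a, b, c} : Finset ℕ).erase w := by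
    intro x hx
    rw [mem_inter] at hx
    rw [mem_erase]
    exact ⟨fun h => hwX (h ▸ hx.2), hx.1⟩
  refine le_trans (card_le_card hsub) ?_
  have h3 : ({a, b, c} : Finset ℕ).card ≤ 3 := by
    refine le_trans (card_insert_le _ _) ?_
    have := card_insert_le b ({c} : Finset ℕ)
    simp only [card_singleton] at this
    omega
  rw [card_erase_of_mem hw]
  omega

lemma triple_le_three {a b c : ℕ} (X' : Finset ℕ) :
    (({a, b, c} : Finset ℕ) ∩ X').card ≤ 3 := by
  refine le_trans (card_le_card inter_subset_left) ?_
  refine le_trans (card_insert_le _ _) ?_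
  have := card_insert_le b ({c} : Finset ℕ)
  simp only [card_singleton] at this
  omega

end BranchAux

open Finset BranchAux

/-- the graph `G` obtained from a branch `B(v)` by adding a new
vertex `q` and the edges `(q,v)`, `(q,r₁)`, `(q,r₂)` satisfies the M-circuit
counting conditions: `|E_G| = 2|V_G| - 2` and every proper subset `X` of the
vertices with `|X| ≥ 2` induces at most `2|X| - 3` edges. -/
theorem ext_graph_M_circuit (B : Branch) (q : ℕ) (hq : q ∉ B.verts) :
    ((extEdges B q).card : ℤ) = 2 * (extVerts B q).card - 2 ∧
    ∀ X ⊂ extVerts B q, 2 ≤ X.card →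
      (((extEdges B q ∩ X.sym2).card : ℤ)) ≤ 2 * X.card - 3 := by
  have hql : q ≠ B.lf := fun h => hq (h ▸ B.leaf_mem)
  have hqr₁ : q ≠ B.r₁ := fun h => hq (h ▸ B.r₁_mem)
  have hqr₂ : q ≠ B.r₂ := fun h => hq (h ▸ B.r₂_mem)
  have e1 : s(q, B.r₂) ∉ B.edges := not_mem_edges B hq
  have e2 : s(q, B.r₁) ∉ insert s(q, B.r₂) B.edges := by
    rw [mem_insert]
    rintro (h | h)
    · rw [Sym2.eq_iff] at h
      rcases h with ⟨-, h⟩ | ⟨h, -⟩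
      exacts [B.root_ne h, hqr₂ h]
    · exact not_mem_edges B hq h
  have e3 : s(q, B.lf) ∉ insert s(q, B.r₁) (insert s(q, B.r₂) B.edges) := by
    rw [mem_insert, mem_insert]
    rintro (h | h | h)
    · rw [Sym2.eq_iff] at h
      rcases h with ⟨-, h⟩ | ⟨h, -⟩
      exacts [B.leaf_ne_r₁ h, hqr₁ h]
    · rw [Sym2.eq_iff] at h
      rcases h with ⟨-, h⟩ | ⟨h, -⟩
      exacts [B.leaf_ne_r₂ h, hqr₂ h]
    · exact not_mem_edges B hq h
  have hcard : (extEdges B q).card = B.edges.card + 3 := by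
    rw [extEdges, card_insert_of_notMem e3, card_insert_of_notMem e2,
      card_insert_of_notMem e1]
  have hvcard : (extVerts B q).card = B.verts.card + 1 := by
    rw [extVerts, card_insert_of_notMem hq]
  have hec := edges_card B
  have hvc := verts_card B
  constructor
  · omega
  · intro X hX hX2
    by_cases hqX : q ∈ X
    · -- q ∈ X
      set X' := X.erase q with hX'def
      have hX'sub : X' ⊆ B.verts := by
        intro x hx
        rw [hX'def, mem_erase] at hx
        have hm := hX.subset hx.2
        rw [extVerts, mem_insert] at hm
        rcases hm with h | h
        exacts [absurd h hx.1, h]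
      have hXcard : X'.card + 1 = X.card := by
        rw [hX'def, card_erase_of_mem hqX]
        omega
      have hmemX' : ∀ v ∈ B.verts, v ∈ X → v ∈ X' := by
        intro v hv hvX
        rw [hX'def, mem_erase]
        exact ⟨fun h => hq (h ▸ hv), hvX⟩
      have hcards : X.card < (extVerts B q).card := card_lt_card hX
      have hX'ss : X' ⊂ B.verts := by
        rw [Finset.ssubset_iff_subset_ne]
        refine ⟨hX'sub, fun h => ?_⟩
        have := congrArg Finset.card h
        omega
      have hdecomp : extEdges B q ∩ X.sym2 ⊆
          (({B.lf, B.r₁, B.r₂} : Finset ℕ) ∩ X').image (fun v => s(q, v)) ∪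
            (B.edges ∩ X'.sym2) := by
        intro e he
        rw [mem_inter] at he
        obtain ⟨h1, h2⟩ := he
        rw [extEdges, mem_insert, mem_insert, mem_insert] at h1
        rw [mem_union]
        rcases h1 with rfl | rfl | rfl | h
        · left
          rw [Finset.mk_mem_sym2_iff] at h2
          refine mem_image.2 ⟨B.lf, ?_, rfl⟩
          rw [mem_inter]
          exact ⟨by simp, hmemX' _ B.leaf_mem h2.2⟩
        · left
          rw [Finset.mk_mem_sym2_iff] at h2
          refine mem_image.2 ⟨B.r₁, ?_, rfl⟩
          rw [mem_inter]
          exact ⟨by simp, hmemX' _ B.r₁_mem h2.2⟩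
        · left
          rw [Finset.mk_mem_sym2_iff] at h2
          refine mem_image.2 ⟨B.r₂, ?_, rfl⟩
          rw [mem_inter]
          exact ⟨by simp, hmemX' _ B.r₂_mem h2.2⟩
        · right
          rw [mem_inter]
          exact ⟨h, edge_sym2_mono B hmemX' e h h2⟩
      have hmain : (extEdges B q ∩ X.sym2).card ≤
          (({B.lf, B.r₁, B.r₂} : Finset ℕ) ∩ X').card + (B.edges ∩ X'.sym2).card := by
        refine le_trans (card_le_card hdecomp) (le_trans (card_union_le _ _) ?_)
        exact Nat.add_le_add_right card_image_le _
      by_cases hall : B.lf ∈ X' ∧ B.r₁ ∈ X' ∧ B.r₂ ∈ X'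
      · have hbl := branch_lemma B X' hX'ss hall.2.1 hall.2.2 hall.1
        have hT3 := triple_le_three (a := B.lf) (b := B.r₁) (c := B.r₂) X'
        omega
      · by_cases hX'2 : 2 ≤ X'.card
        · have hl := laman B X' hX'sub hX'2
          have hT2 : (({B.lf, B.r₁, B.r₂} : Finset ℕ) ∩ X').card ≤ 2 := by
            by_cases hl1 : B.lf ∈ X'
            · by_cases hr1 : B.r₁ ∈ X'
              · exact triple_bound B.r₂ (by simp) (fun h => hall ⟨hl1, hr1, h⟩)
              · exact triple_bound B.r₁ (by simp) hr1
            · exact triple_bound B.lf (by simp) hl1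
          omega
        · have hB0 : B.edges ∩ X'.sym2 = ∅ := small_inter B (by omega)
          have hT1 : (({B.lf, B.r₁, B.r₂} : Finset ℕ) ∩ X').card ≤ X'.card :=
            card_le_card inter_subset_right
          rw [hB0] at hmain
          simp only [card_empty] at hmain
          omega
    · -- q ∉ X
      have hXV : X ⊆ B.verts := by
        intro x hx
        have hm := hX.subset hx
        rw [extVerts, mem_insert] at hm
        rcases hm with rfl | h
        exacts [absurd hx hqX, h]
      have hsub : extEdges B q ∩ X.sym2 ⊆ B.edges ∩ X.sym2 := by
        intro e he
        rw [mem_inter] at he ⊢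
        refine ⟨?_, he.2⟩
        have h1 := he.1
        rw [extEdges, mem_insert, mem_insert, mem_insert] at h1
        rcases h1 with rfl | rfl | rfl | h
        · exfalso
          have h2 := he.2
          rw [Finset.mk_mem_sym2_iff] at h2
          exact hqX h2.1
        · exfalso
          have h2 := he.2
          rw [Finset.mk_mem_sym2_iff] at h2
          exact hqX h2.1
        · exfalso
          have h2 := he.2
          rw [Finset.mk_mem_sym2_iff] at h2
          exact hqX h2.1
        · exact h
      have hl := laman B X hXV hX2
      have hcc := card_le_card hsub
      omega
end

section
/- Let B(v) be a branch with roots r₁, r₂ and leaf v, and G obtained by adding vertex q and edges (q,v), (q,r₁), (q,r₂). Assuming Hendrickson's criterion (a 3-connected graph with an M-circuit skeletal subgraph is globally rigid), G is globally rigid. -/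
namespace Branch
variable (B : Branch)

lemma mem_edges_iff {e : Sym2 ℕ} : e ∈ B.edges ↔ e = s(B.r₁, B.r₂) ∨
    ∃ x ∈ B.verts, x ≠ B.r₁ ∧ x ≠ B.r₂ ∧ (e = s(x, B.p₁ x) ∨ e = s(x, B.p₂ x)) := by
  simp only [edges, Finset.mem_insert, Finset.mem_biUnion, Finset.mem_filter,
    Finset.mem_insert, Finset.mem_singleton]
  constructor
  · rintro (h | ⟨x, ⟨hx, h1, h2⟩, h3⟩)
    · exact Or.inl h
    · exact Or.inr ⟨x, hx, h1, h2, h3⟩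
  · rintro (h | ⟨x, hx, h1, h2, h3⟩)
    · exact Or.inl h
    · exact Or.inr ⟨x, ⟨hx, h1, h2⟩, h3⟩

lemma edge_mem_verts {e : Sym2 ℕ} (he : e ∈ B.edges) : ∀ a ∈ e, a ∈ B.verts := by
  rw [B.mem_edges_iff] at he
  intro a ha
  rcases he with h | ⟨x, hx, h1, h2, (h3 | h3)⟩ <;> subst ‹e = _› <;>
    rw [Sym2.mem_iff] at ha <;> rcases ha with h | h <;> subst h
  · exact B.r₁_mem
  · exact B.r₂_mem
  · exact hx
  · exact B.parent₁_mem x hx h1 h2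
  · exact hx
  · exact B.parent₂_mem x hx h1 h2

lemma edge_eq_child {x y px py : ℕ} (f : ℕ → ℕ) (hpx : f px < f x) (hpy : f py < f y)
    (h : s(x, px) = s(y, py)) : x = y := by
  rw [Sym2.eq_iff] at h
  rcases h with ⟨h1, h2⟩ | ⟨h1, h2⟩
  · exact h1
  · subst h1; subst h2; omega

lemma self_ne_p₁ {x : ℕ} (hx : x ∈ B.verts) (h1 : x ≠ B.r₁) (h2 : x ≠ B.r₂) :
    x ≠ B.p₁ x := fun h => absurd (B.rank_lt₁ x hx h1 h2) (by rw [← h]; omega)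

lemma self_ne_p₂ {x : ℕ} (hx : x ∈ B.verts) (h1 : x ≠ B.r₁) (h2 : x ≠ B.r₂) :
    x ≠ B.p₂ x := fun h => absurd (B.rank_lt₂ x hx h1 h2) (by rw [← h]; omega)

lemma card_edges : B.edges.card = 2 * B.verts.card - 3 := by
  have hdisj : s(B.r₁, B.r₂) ∉ (B.verts.filter (fun x => x ≠ B.r₁ ∧ x ≠ B.r₂)).biUnion
      (fun x => {s(x, B.p₁ x), s(x, B.p₂ x)}) := by
    simp only [Finset.mem_biUnion, Finset.mem_filter, Finset.mem_insert, Finset.mem_singleton]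
    rintro ⟨x, ⟨hx, h1, h2⟩, (h | h)⟩ <;> rw [Sym2.eq_iff] at h <;> tauto
  rw [edges, Finset.card_insert_of_notMem hdisj]
  rw [Finset.card_biUnion]
  · have hsum : ∀ x ∈ B.verts.filter (fun x => x ≠ B.r₁ ∧ x ≠ B.r₂),
        ({s(x, B.p₁ x), s(x, B.p₂ x)} : Finset (Sym2 ℕ)).card = 2 := by
      intro x hx
      simp only [Finset.mem_filter] at hx
      rw [Finset.card_insert_of_notMem, Finset.card_singleton]
      simp only [Finset.mem_singleton, Sym2.eq_iff]
      push_neg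
      exact ⟨fun _ => B.parents_ne x hx.1 hx.2.1 hx.2.2, fun h => absurd h (B.self_ne_p₂ hx.1 hx.2.1 hx.2.2)⟩
    rw [Finset.sum_congr rfl hsum, Finset.sum_const, smul_eq_mul]
    have hcard : (B.verts.filter (fun x => x ≠ B.r₁ ∧ x ≠ B.r₂)).card = B.verts.card - 2 := by
      have : B.verts.filter (fun x => x ≠ B.r₁ ∧ x ≠ B.r₂) = B.verts \ {B.r₁, B.r₂} := by
        ext z; simp only [Finset.mem_filter, Finset.mem_sdiff, Finset.mem_insert, Finset.mem_singleton]; tauto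
      rw [this, Finset.card_sdiff_of_subset (by
        intro z hz; simp only [Finset.mem_insert, Finset.mem_singleton] at hz
        rcases hz with h | h <;> subst h <;> [exact B.r₁_mem; exact B.r₂_mem])]
      rw [Finset.card_insert_of_notMem (by simp [B.root_ne]), Finset.card_singleton]
    rw [hcard]
    have h2 : 2 ≤ B.verts.card := by
      have := Finset.one_lt_card.mpr ⟨B.r₁, B.r₁_mem, B.r₂, B.r₂_mem, B.root_ne⟩
      omega
    omega
  · -- pairwise disjoint
    intro x hx y hy hxy
    simp only [Finset.mem_coe, Finset.mem_filter] at hx hy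
    simp only [Finset.disjoint_left, Finset.mem_insert, Finset.mem_singleton]
    rintro e (he | he) (he' | he') <;> rw [he'] at he <;> refine hxy (edge_eq_child B.rank ?_ ?_ he.symm) <;>
      first
      | exact B.rank_lt₁ _ hx.1 hx.2.1 hx.2.2
      | exact B.rank_lt₂ _ hx.1 hx.2.1 hx.2.2
      | exact B.rank_lt₁ _ hy.1 hy.2.1 hy.2.2
      | exact B.rank_lt₂ _ hy.1 hy.2.1 hy.2.2



/-- parent edges of a vertex -/
def pedges (x : ℕ) : Finset (Sym2 ℕ) := {s(x, B.p₁ x), s(x, B.p₂ x)}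

lemma induced_subset (Y : Finset ℕ) :
    B.edges ∩ Y.sym2 ⊆ insert s(B.r₁, B.r₂)
      ((Y.filter (fun x => x ≠ B.r₁ ∧ x ≠ B.r₂)).biUnion
        (fun x => (B.pedges x).filter (· ∈ Y.sym2))) := by
  intro e he
  rw [Finset.mem_inter] at he
  obtain ⟨heE, heY⟩ := he
  rw [B.mem_edges_iff] at heE
  rcases heE with h | ⟨x, hx, h1, h2, h3⟩
  · rw [h]; exact Finset.mem_insert_self _ _
  · refine Finset.mem_insert_of_mem (Finset.mem_biUnion.mpr ⟨x, ?_, ?_⟩)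
    · have hxY : x ∈ Y := by
        rcases h3 with h3 | h3 <;> rw [h3, Finset.mk_mem_sym2_iff] at heY <;> exact heY.1
      exact Finset.mem_filter.mpr ⟨hxY, h1, h2⟩
    · refine Finset.mem_filter.mpr ⟨?_, heY⟩
      rcases h3 with h3 | h3 <;> rw [h3] <;> simp [pedges]

lemma induced_subset' (Y : Finset ℕ) (hr : B.r₁ ∉ Y ∨ B.r₂ ∉ Y) :
    B.edges ∩ Y.sym2 ⊆
      ((Y.filter (fun x => x ≠ B.r₁ ∧ x ≠ B.r₂)).biUnion
        (fun x => (B.pedges x).filter (· ∈ Y.sym2))) := by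
  intro e he
  have h := B.induced_subset Y he
  rw [Finset.mem_insert] at h
  rcases h with h | h
  · exfalso
    rw [Finset.mem_inter] at he
    rw [h, Finset.mk_mem_sym2_iff] at he
    rcases hr with hr | hr <;> [exact hr he.2.1; exact hr he.2.2]
  · exact h

lemma f_le_two (Y : Finset ℕ) (x : ℕ) : ((B.pedges x).filter (· ∈ Y.sym2)).card ≤ 2 :=
  (Finset.card_filter_le _ _).trans
    ((Finset.card_insert_le _ _).trans (by simp))

lemma f_le_one (Y : Finset ℕ) (x : ℕ) (h : B.p₁ x ∉ Y ∨ B.p₂ x ∉ Y) :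
    ((B.pedges x).filter (· ∈ Y.sym2)).card ≤ 1 := by
  rcases h with h | h
  · refine (Finset.card_le_card (fun e he => ?_)).trans (Finset.card_singleton (s(x, B.p₂ x))).le
    rw [Finset.mem_filter] at he
    obtain ⟨he1, he2⟩ := he
    simp only [pedges, Finset.mem_insert, Finset.mem_singleton] at he1
    rcases he1 with he1 | he1
    · rw [he1, Finset.mk_mem_sym2_iff] at he2; exact absurd he2.2 h
    · simpa using he1
  · refine (Finset.card_le_card (fun e he => ?_)).trans (Finset.card_singleton (s(x, B.p₁ x))).le
    rw [Finset.mem_filter] at he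
    obtain ⟨he1, he2⟩ := he
    simp only [pedges, Finset.mem_insert, Finset.mem_singleton] at he1
    rcases he1 with he1 | he1
    · simpa using he1
    · rw [he1, Finset.mk_mem_sym2_iff] at he2; exact absurd he2.2 h

lemma f_le_zero (Y : Finset ℕ) (x : ℕ) (h1 : B.p₁ x ∉ Y) (h2 : B.p₂ x ∉ Y) :
    ((B.pedges x).filter (· ∈ Y.sym2)).card = 0 := by
  rw [Finset.card_eq_zero, Finset.filter_eq_empty_iff]
  intro e he
  simp only [pedges, Finset.mem_insert, Finset.mem_singleton] at he
  rcases he with he | he <;> rw [he] <;> simp only [Finset.mk_mem_sym2_iff] <;> tauto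

/-- a minimal-rank nonroot vertex of `Y` has all its `Y`-parents among the roots -/
lemma min_parents {Y : Finset ℕ} (hY : Y ⊆ B.verts) {m : ℕ}
    (hm : m ∈ Y.filter (fun x => x ≠ B.r₁ ∧ x ≠ B.r₂))
    (hmin : ∀ b ∈ Y.filter (fun x => x ≠ B.r₁ ∧ x ≠ B.r₂), B.rank m ≤ B.rank b) :
    ∀ p, (p = B.p₁ m ∨ p = B.p₂ m) → p ∈ Y → (p = B.r₁ ∨ p = B.r₂) := by
  rw [Finset.mem_filter] at hm
  obtain ⟨hmY, hm1, hm2⟩ := hm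
  intro p hp hpY
  by_contra hcon
  push_neg at hcon
  have hpN : p ∈ Y.filter (fun x => x ≠ B.r₁ ∧ x ≠ B.r₂) :=
    Finset.mem_filter.mpr ⟨hpY, hcon⟩
  have := hmin p hpN
  have h1 := B.rank_lt₁ m (hY hmY) hm1 hm2
  have h2 := B.rank_lt₂ m (hY hmY) hm1 hm2
  rcases hp with hp | hp <;> subst hp <;> omega

lemma nonroot_card (Y : Finset ℕ) :
    (Y.filter (fun x => x ≠ B.r₁ ∧ x ≠ B.r₂)).card
      + (Y ∩ {B.r₁, B.r₂}).card = Y.card := by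
  have h : Y.filter (fun x => x ≠ B.r₁ ∧ x ≠ B.r₂) = Y \ {B.r₁, B.r₂} := by
    ext z
    simp only [Finset.mem_filter, Finset.mem_sdiff, Finset.mem_insert, Finset.mem_singleton]
    tauto
  rw [h, add_comm, Finset.card_inter_add_card_sdiff]

lemma sparse {Y : Finset ℕ} (hY : Y ⊆ B.verts) (h2 : 2 ≤ Y.card) :
    (B.edges ∩ Y.sym2).card + 3 ≤ 2 * Y.card := by
  set N := Y.filter (fun x => x ≠ B.r₁ ∧ x ≠ B.r₂) with hN
  set a := (Y ∩ {B.r₁, B.r₂}).card with ha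
  clear_value N a
  have hNa : N.card + a = Y.card := by rw [hN, ha]; exact B.nonroot_card Y
  have ha2 : a ≤ 2 := by
    rw [ha]
    exact le_trans (Finset.card_le_card Finset.inter_subset_right)
      (le_trans (Finset.card_insert_le _ _) (by simp))
  by_cases hr : B.r₁ ∈ Y ∧ B.r₂ ∈ Y
  · -- both roots in Y
    have hcard := Finset.card_le_card (B.induced_subset Y)
    have hbi := Finset.card_biUnion_le (s := N) (t := fun x => (B.pedges x).filter (· ∈ Y.sym2))
    have hsum : ∑ x ∈ N, ((B.pedges x).filter (· ∈ Y.sym2)).card ≤ 2 * N.card := by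
      calc ∑ x ∈ N, ((B.pedges x).filter (· ∈ Y.sym2)).card
          ≤ ∑ _x ∈ N, 2 := Finset.sum_le_sum (fun x _ => B.f_le_two Y x)
        _ = 2 * N.card := by rw [Finset.sum_const, smul_eq_mul, mul_comm]
    have haeq : a = 2 := by
      have : {B.r₁, B.r₂} ⊆ Y := by
        intro z hz; simp only [Finset.mem_insert, Finset.mem_singleton] at hz
        rcases hz with h | h <;> subst h <;> tauto
      have := Finset.card_le_card (Finset.subset_inter this Finset.Subset.rfl)
      rw [Finset.card_insert_of_notMem (by simp [B.root_ne]), Finset.card_singleton] at this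
      omega
    rw [← hN] at hcard
    have := (hcard.trans (Finset.card_insert_le _ _)).trans (Nat.add_le_add_right hbi 1)
    omega
  · -- at most one root in Y
    rw [not_and_or] at hr
    have ha1 : a ≤ 1 := by
      rw [ha, Finset.card_le_one]
      intro u hu v hv
      simp only [Finset.mem_inter, Finset.mem_insert, Finset.mem_singleton] at hu hv
      rcases hu.2 with h | h <;> rcases hv.2 with h' | h' <;> subst h <;> subst h' <;>
        first | rfl | (exfalso; tauto)
    have hcard := Finset.card_le_card (B.induced_subset' Y hr)
    rw [← hN] at hcard
    have hbi := Finset.card_biUnion_le (s := N) (t := fun x => (B.pedges x).filter (· ∈ Y.sym2))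
    -- N is nonempty
    have hNne : N.Nonempty := by
      rw [← Finset.card_pos]; omega
    obtain ⟨m, hmN, hmin⟩ := Finset.exists_min_image N B.rank hNne
    have hfm1 : ((B.pedges m).filter (· ∈ Y.sym2)).card ≤ 1 := by
      refine B.f_le_one Y m ?_
      by_contra hcon
      push_neg at hcon
      have k1 := B.min_parents hY (hN ▸ hmN) (fun b hb => hmin b (hN.symm ▸ hb)) (B.p₁ m) (Or.inl rfl) hcon.1
      have k2 := B.min_parents hY (hN ▸ hmN) (fun b hb => hmin b (hN.symm ▸ hb)) (B.p₂ m) (Or.inr rfl) hcon.2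
      have hmm := Finset.mem_filter.mp (hN ▸ hmN)
      have hpne := B.parents_ne m (hY hmm.1) hmm.2.1 hmm.2.2
      rcases k1 with k1 | k1 <;> rcases k2 with k2 | k2 <;>
        first
        | (exact hpne (k1.symm ▸ k2.symm ▸ rfl))
        | (rcases hr with hr | hr <;>
            first
            | exact hr (k1 ▸ hcon.1)
            | exact hr (k2 ▸ hcon.2)
            | exact hr (k1 ▸ hcon.1)
            | exact hr (k2 ▸ hcon.2))
    rcases Nat.lt_or_ge a 1 with ha0 | ha1'
    · have hroots : B.r₁ ∉ Y ∧ B.r₂ ∉ Y := by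
        constructor <;> intro hin
        · have h' : B.r₁ ∈ Y ∩ {B.r₁, B.r₂} := Finset.mem_inter.mpr ⟨hin, by simp⟩
          have := Finset.card_pos.mpr ⟨_, h'⟩; omega
        · have h' : B.r₂ ∈ Y ∩ {B.r₁, B.r₂} := Finset.mem_inter.mpr ⟨hin, by simp⟩
          have := Finset.card_pos.mpr ⟨_, h'⟩; omega
      have hfm0 : ((B.pedges m).filter (· ∈ Y.sym2)).card = 0 := by
        refine B.f_le_zero Y m ?_ ?_ <;> intro hin
        · rcases B.min_parents hY (hN ▸ hmN) (fun b hb => hmin b (hN.symm ▸ hb)) (B.p₁ m) (Or.inl rfl) hin with h | h <;>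
            [exact hroots.1 (h ▸ hin); exact hroots.2 (h ▸ hin)]
        · rcases B.min_parents hY (hN ▸ hmN) (fun b hb => hmin b (hN.symm ▸ hb)) (B.p₂ m) (Or.inr rfl) hin with h | h <;>
            [exact hroots.1 (h ▸ hin); exact hroots.2 (h ▸ hin)]
      have hN2 : 2 ≤ N.card := by omega
      have hNe : (N.erase m).Nonempty := by
        rw [← Finset.card_pos, Finset.card_erase_of_mem hmN]; omega
      obtain ⟨m', hm'N, hmin'⟩ := Finset.exists_min_image (N.erase m) B.rank hNe
      have hm'inN : m' ∈ N := Finset.mem_of_mem_erase hm'N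
      have hfm' : ((B.pedges m').filter (· ∈ Y.sym2)).card ≤ 1 := by
        refine B.f_le_one Y m' ?_
        by_contra hcon
        push_neg at hcon
        have key : ∀ p, (p = B.p₁ m' ∨ p = B.p₂ m') → p ∈ Y → p = m := by
          intro p hp hpY
          have hpN : p ∈ N := by
            rw [hN, Finset.mem_filter]
            exact ⟨hpY, fun h => hroots.1 (h ▸ hpY), fun h => hroots.2 (h ▸ hpY)⟩
          by_contra hpm
          have := hmin' p (Finset.mem_erase.mpr ⟨hpm, hpN⟩)
          have hm'm := Finset.mem_filter.mp (hN ▸ hm'inN)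
          have k1 := B.rank_lt₁ m' (hY hm'm.1) hm'm.2.1 hm'm.2.2
          have k2 := B.rank_lt₂ m' (hY hm'm.1) hm'm.2.1 hm'm.2.2
          rcases hp with hp | hp <;> subst hp <;> omega
        have e1 := key _ (Or.inl rfl) hcon.1
        have e2 := key _ (Or.inr rfl) hcon.2
        have hm'm := Finset.mem_filter.mp (hN ▸ hm'inN)
        exact B.parents_ne m' (hY hm'm.1) hm'm.2.1 hm'm.2.2 (e1.trans e2.symm)
      have hsum : ∑ x ∈ N, ((B.pedges x).filter (· ∈ Y.sym2)).card ≤ 2 * N.card - 3 := by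
        rw [← Finset.add_sum_erase N _ hmN, ← Finset.add_sum_erase _ _ hm'N]
        have htail : ∑ x ∈ (N.erase m).erase m', ((B.pedges x).filter (· ∈ Y.sym2)).card
            ≤ 2 * (N.card - 2) := by
          calc ∑ x ∈ (N.erase m).erase m', ((B.pedges x).filter (· ∈ Y.sym2)).card
              ≤ ∑ _x ∈ (N.erase m).erase m', 2 := Finset.sum_le_sum (fun x _ => B.f_le_two Y x)
            _ = 2 * (N.card - 2) := by
                rw [Finset.sum_const, smul_eq_mul, mul_comm,
                  Finset.card_erase_of_mem hm'N, Finset.card_erase_of_mem hmN]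
                omega
        omega
      omega
    · -- a = 1
      have hsum : ∑ x ∈ N, ((B.pedges x).filter (· ∈ Y.sym2)).card ≤ 2 * N.card - 1 := by
        rw [← Finset.add_sum_erase N _ hmN]
        have : ∑ x ∈ N.erase m, ((B.pedges x).filter (· ∈ Y.sym2)).card ≤ 2 * (N.card - 1) := by
          calc ∑ x ∈ N.erase m, ((B.pedges x).filter (· ∈ Y.sym2)).card
              ≤ ∑ _x ∈ N.erase m, 2 := Finset.sum_le_sum (fun x _ => B.f_le_two Y x)
            _ = 2 * (N.card - 1) := by
                rw [Finset.sum_const, smul_eq_mul, mul_comm, Finset.card_erase_of_mem hmN]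
        have hN1 : 1 ≤ N.card := Finset.card_pos.mpr hNne
        omega
      have hN1 : 1 ≤ N.card := Finset.card_pos.mpr hNne
      omega



lemma exists_exposed_aux {Y : Finset ℕ} (hlf : B.lf ∈ Y) :
    ∀ n : ℕ, ∀ u ∈ B.verts, (B.verts.filter (fun z => B.rank u < B.rank z)).card ≤ n →
      u ∉ Y → u ≠ B.r₁ → u ≠ B.r₂ →
      ∃ c ∈ Y, c ≠ B.r₁ ∧ c ≠ B.r₂ ∧ (B.p₁ c ∉ Y ∨ B.p₂ c ∉ Y) := by
  intro n
  induction n with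
  | zero =>
    intro u hu hcard huY h1 h2
    exfalso
    have hulf : u ≠ B.lf := fun h => huY (h ▸ hlf)
    obtain ⟨c, hc, hc1, hc2, hcp⟩ := B.has_child u hu h1 h2 hulf
    have hrank : B.rank u < B.rank c := by
      rcases hcp with h | h
      · have h' := B.rank_lt₁ c hc hc1 hc2; rw [h] at h'; exact h'
      · have h' := B.rank_lt₂ c hc hc1 hc2; rw [h] at h'; exact h'
    have : c ∈ B.verts.filter (fun z => B.rank u < B.rank z) :=
      Finset.mem_filter.mpr ⟨hc, hrank⟩
    have := Finset.card_pos.mpr ⟨c, this⟩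
    omega
  | succ n ih =>
    intro u hu hcard huY h1 h2
    have hulf : u ≠ B.lf := fun h => huY (h ▸ hlf)
    obtain ⟨c, hc, hc1, hc2, hcp⟩ := B.has_child u hu h1 h2 hulf
    have hrank : B.rank u < B.rank c := by
      rcases hcp with h | h
      · have h' := B.rank_lt₁ c hc hc1 hc2; rw [h] at h'; exact h'
      · have h' := B.rank_lt₂ c hc hc1 hc2; rw [h] at h'; exact h'
    by_cases hcY : c ∈ Y
    · refine ⟨c, hcY, hc1, hc2, ?_⟩
      rcases hcp with h | h
      · exact Or.inl (h.symm ▸ huY)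
      · exact Or.inr (h.symm ▸ huY)
    · refine ih c hc ?_ hcY hc1 hc2
      have hsub : B.verts.filter (fun z => B.rank c < B.rank z) ⊆
          (B.verts.filter (fun z => B.rank u < B.rank z)).erase c := by
        intro z hz
        rw [Finset.mem_filter] at hz
        refine Finset.mem_erase.mpr ⟨fun h => by subst h; omega,
          Finset.mem_filter.mpr ⟨hz.1, by omega⟩⟩
      have hcmem : c ∈ B.verts.filter (fun z => B.rank u < B.rank z) :=
        Finset.mem_filter.mpr ⟨hc, hrank⟩
      have := Finset.card_le_card hsub
      rw [Finset.card_erase_of_mem hcmem] at this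
      have := Finset.card_pos.mpr ⟨c, hcmem⟩
      omega

lemma sparse_refined {Y : Finset ℕ} (hY : Y ⊆ B.verts) (hne : Y ≠ B.verts)
    (hr1 : B.r₁ ∈ Y) (hr2 : B.r₂ ∈ Y) (hlf : B.lf ∈ Y) :
    (B.edges ∩ Y.sym2).card + 4 ≤ 2 * Y.card := by
  obtain ⟨u, huV, huY⟩ : ∃ u ∈ B.verts, u ∉ Y := by
    by_contra h
    push_neg at h
    exact hne (Finset.Subset.antisymm hY h)
  obtain ⟨c, hcY, hc1, hc2, hcp⟩ := B.exists_exposed_aux hlf _ u huV le_rfl huY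
    (fun h => huY (h ▸ hr1)) (fun h => huY (h ▸ hr2))
  set N := Y.filter (fun x => x ≠ B.r₁ ∧ x ≠ B.r₂) with hN
  clear_value N
  have hcN : c ∈ N := by rw [hN]; exact Finset.mem_filter.mpr ⟨hcY, hc1, hc2⟩
  have hNa : N.card + (Y ∩ {B.r₁, B.r₂}).card = Y.card := by
    rw [hN]; exact B.nonroot_card Y
  have haeq : (Y ∩ {B.r₁, B.r₂}).card = 2 := by
    have hsub : {B.r₁, B.r₂} ⊆ Y ∩ {B.r₁, B.r₂} := by
      intro z hz
      simp only [Finset.mem_insert, Finset.mem_singleton] at hz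
      refine Finset.mem_inter.mpr ⟨?_, by simpa using hz⟩
      rcases hz with h | h <;> subst h <;> assumption
    have h1 := Finset.card_le_card hsub
    have h2 := Finset.card_le_card (Finset.inter_subset_right : Y ∩ {B.r₁, B.r₂} ⊆ _)
    rw [Finset.card_insert_of_notMem (by simp [B.root_ne]), Finset.card_singleton] at h1 h2
    omega
  have hcard := Finset.card_le_card (B.induced_subset Y)
  rw [← hN] at hcard
  have hbi := Finset.card_biUnion_le (s := N) (t := fun x => (B.pedges x).filter (· ∈ Y.sym2))
  have hfc : ((B.pedges c).filter (· ∈ Y.sym2)).card ≤ 1 := B.f_le_one Y c hcp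
  have hsum : ∑ x ∈ N, ((B.pedges x).filter (· ∈ Y.sym2)).card ≤ 2 * N.card - 1 := by
    rw [← Finset.add_sum_erase N _ hcN]
    have htail : ∑ x ∈ N.erase c, ((B.pedges x).filter (· ∈ Y.sym2)).card
        ≤ 2 * (N.card - 1) := by
      calc ∑ x ∈ N.erase c, ((B.pedges x).filter (· ∈ Y.sym2)).card
          ≤ ∑ _x ∈ N.erase c, 2 := Finset.sum_le_sum (fun x _ => B.f_le_two Y x)
        _ = 2 * (N.card - 1) := by
            rw [Finset.sum_const, smul_eq_mul, mul_comm, Finset.card_erase_of_mem hcN]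
    have : 1 ≤ N.card := Finset.card_pos.mpr ⟨c, hcN⟩
    omega
  have hins := Finset.card_insert_le s(B.r₁, B.r₂)
    (N.biUnion fun x => (B.pedges x).filter (· ∈ Y.sym2))
  have h1N : 1 ≤ N.card := Finset.card_pos.mpr ⟨c, hcN⟩
  omega

end Branch

lemma ext_adj {B : Branch} {q a b : ℕ} (h : s(a, b) ∈ extEdges B q) (hne : a ≠ b) :
    (extGraph B q).Adj a b := by
  rw [extGraph, SimpleGraph.fromEdgeSet_adj]
  exact ⟨by exact_mod_cast h, hne⟩

lemma branch_subset_ext (B : Branch) (q : ℕ) : B.edges ⊆ extEdges B q := by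
  intro e he
  simp only [extEdges, Finset.mem_insert]
  tauto

/-- descend to a root avoiding a single forbidden vertex `t`, staying in `B.verts` -/
lemma descend (B : Branch) (q t : ℕ) :
    ∀ n : ℕ, ∀ x ∈ B.verts, B.rank x ≤ n → x ≠ t →
      ∃ (r : ℕ) (w : (extGraph B q).Walk x r), (r = B.r₁ ∨ r = B.r₂) ∧
        (∀ z ∈ w.support, z ∈ B.verts ∧ z ≠ t) := by
  intro n
  induction n with
  | zero =>
    intro x hx hr hxt
    by_cases h1 : x = B.r₁
    · exact ⟨x, SimpleGraph.Walk.nil, Or.inl h1, by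
        intro z hz; rw [SimpleGraph.Walk.support_nil, List.mem_singleton] at hz
        subst hz; exact ⟨hx, hxt⟩⟩
    by_cases h2 : x = B.r₂
    · exact ⟨x, SimpleGraph.Walk.nil, Or.inr h2, by
        intro z hz; rw [SimpleGraph.Walk.support_nil, List.mem_singleton] at hz
        subst hz; exact ⟨hx, hxt⟩⟩
    · exfalso; have := B.rank_lt₁ x hx h1 h2; omega
  | succ n ih =>
    intro x hx hr hxt
    by_cases h1 : x = B.r₁
    · exact ⟨x, SimpleGraph.Walk.nil, Or.inl h1, by
        intro z hz; rw [SimpleGraph.Walk.support_nil, List.mem_singleton] at hz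
        subst hz; exact ⟨hx, hxt⟩⟩
    by_cases h2 : x = B.r₂
    · exact ⟨x, SimpleGraph.Walk.nil, Or.inr h2, by
        intro z hz; rw [SimpleGraph.Walk.support_nil, List.mem_singleton] at hz
        subst hz; exact ⟨hx, hxt⟩⟩
    -- pick a parent ≠ t
    have hmem₁ : s(x, B.p₁ x) ∈ extEdges B q :=
      branch_subset_ext B q (B.mem_edges_iff.mpr (Or.inr ⟨x, hx, h1, h2, Or.inl rfl⟩))
    have hmem₂ : s(x, B.p₂ x) ∈ extEdges B q :=
      branch_subset_ext B q (B.mem_edges_iff.mpr (Or.inr ⟨x, hx, h1, h2, Or.inr rfl⟩))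
    have hrk₁ := B.rank_lt₁ x hx h1 h2
    have hrk₂ := B.rank_lt₂ x hx h1 h2
    by_cases hp : B.p₁ x = t
    · -- use p₂
      have hpt : B.p₂ x ≠ t := fun h => B.parents_ne x hx h1 h2 (hp.trans h.symm)
      obtain ⟨r, w, hrr, hsup⟩ := ih (B.p₂ x) (B.parent₂_mem x hx h1 h2) (by omega) hpt
      refine ⟨r, SimpleGraph.Walk.cons (ext_adj hmem₂ (B.self_ne_p₂ hx h1 h2)) w, hrr, ?_⟩
      intro z hz
      rw [SimpleGraph.Walk.support_cons, List.mem_cons] at hz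
      rcases hz with hz | hz
      · subst hz; exact ⟨hx, hxt⟩
      · exact hsup z hz
    · obtain ⟨r, w, hrr, hsup⟩ := ih (B.p₁ x) (B.parent₁_mem x hx h1 h2) (by omega) hp
      refine ⟨r, SimpleGraph.Walk.cons (ext_adj hmem₁ (B.self_ne_p₁ hx h1 h2)) w, hrr, ?_⟩
      intro z hz
      rw [SimpleGraph.Walk.support_cons, List.mem_cons] at hz
      rcases hz with hz | hz
      · subst hz; exact ⟨hx, hxt⟩
      · exact hsup z hz

/-- ascend to the leaf: all support vertices have rank at least `rank x` -/
lemma ascend (B : Branch) (q : ℕ) :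
    ∀ n : ℕ, ∀ x ∈ B.verts, x ≠ B.r₁ → x ≠ B.r₂ →
      (B.verts.filter (fun z => B.rank x < B.rank z)).card ≤ n →
      ∃ w : (extGraph B q).Walk x B.lf,
        ∀ z ∈ w.support, z ∈ B.verts ∧ B.rank x ≤ B.rank z := by
  intro n
  induction n with
  | zero =>
    intro x hx h1 h2 hcard
    by_cases hlf : x = B.lf
    · subst hlf
      exact ⟨SimpleGraph.Walk.nil, by
        intro z hz; rw [SimpleGraph.Walk.support_nil, List.mem_singleton] at hz
        subst hz; exact ⟨hx, le_rfl⟩⟩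
    · exfalso
      obtain ⟨c, hc, hc1, hc2, hcp⟩ := B.has_child x hx h1 h2 hlf
      have hrank : B.rank x < B.rank c := by
        rcases hcp with h | h
        · have h' := B.rank_lt₁ c hc hc1 hc2; rw [h] at h'; exact h'
        · have h' := B.rank_lt₂ c hc hc1 hc2; rw [h] at h'; exact h'
      have : c ∈ B.verts.filter (fun z => B.rank x < B.rank z) :=
        Finset.mem_filter.mpr ⟨hc, hrank⟩
      have := Finset.card_pos.mpr ⟨c, this⟩
      omega
  | succ n ih =>
    intro x hx h1 h2 hcard
    by_cases hlf : x = B.lf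
    · subst hlf
      exact ⟨SimpleGraph.Walk.nil, by
        intro z hz; rw [SimpleGraph.Walk.support_nil, List.mem_singleton] at hz
        subst hz; exact ⟨hx, le_rfl⟩⟩
    · obtain ⟨c, hc, hc1, hc2, hcp⟩ := B.has_child x hx h1 h2 hlf
      have hrank : B.rank x < B.rank c := by
        rcases hcp with h | h
        · have h' := B.rank_lt₁ c hc hc1 hc2; rw [h] at h'; exact h'
        · have h' := B.rank_lt₂ c hc hc1 hc2; rw [h] at h'; exact h'
      have hmem : s(x, c) ∈ extEdges B q := by
        refine branch_subset_ext B q (B.mem_edges_iff.mpr (Or.inr ⟨c, hc, hc1, hc2, ?_⟩))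
        rcases hcp with h | h
        · exact Or.inl (by rw [h, Sym2.eq_swap])
        · exact Or.inr (by rw [h, Sym2.eq_swap])
      have hxc : x ≠ c := fun h => by subst h; omega
      have hmeas : (B.verts.filter (fun z => B.rank c < B.rank z)).card ≤ n := by
        have hsub : B.verts.filter (fun z => B.rank c < B.rank z) ⊆
            (B.verts.filter (fun z => B.rank x < B.rank z)).erase c := by
          intro z hz
          rw [Finset.mem_filter] at hz
          refine Finset.mem_erase.mpr ⟨fun h => by subst h; omega,
            Finset.mem_filter.mpr ⟨hz.1, by omega⟩⟩
        have hcmem : c ∈ B.verts.filter (fun z => B.rank x < B.rank z) :=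
          Finset.mem_filter.mpr ⟨hc, hrank⟩
        have := Finset.card_le_card hsub
        rw [Finset.card_erase_of_mem hcmem] at this
        have := Finset.card_pos.mpr ⟨c, hcmem⟩
        omega
      obtain ⟨w, hsup⟩ := ih c hc hc1 hc2 hmeas
      refine ⟨SimpleGraph.Walk.cons (ext_adj hmem hxc) w, ?_⟩
      intro z hz
      rw [SimpleGraph.Walk.support_cons, List.mem_cons] at hz
      rcases hz with hz | hz
      · subst hz; exact ⟨hx, le_rfl⟩
      · obtain ⟨hz1, hz2⟩ := hsup z hz
        exact ⟨hz1, by omega⟩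

/-- reach any surviving branch vertex from q, avoiding two forbidden vertices -/
lemma reach_q (B : Branch) (q t₁ t₂ : ℕ) (hq : q ∉ B.verts) (hq1 : q ≠ t₁) (hq2 : q ≠ t₂) :
    ∀ n : ℕ, ∀ x ∈ B.verts, B.rank x ≤ n → x ≠ t₁ → x ≠ t₂ →
      ∃ w : (extGraph B q).Walk q x, t₁ ∉ w.support ∧ t₂ ∉ w.support := by
  have hbase : ∀ x ∈ B.verts, (x = B.r₁ ∨ x = B.r₂ ∨ x = B.lf) → x ≠ t₁ → x ≠ t₂ →
      ∃ w : (extGraph B q).Walk q x, t₁ ∉ w.support ∧ t₂ ∉ w.support := by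
    intro x hx hcase hx1 hx2
    have hqx : q ≠ x := fun h => hq (h ▸ hx)
    have hmem : s(q, x) ∈ extEdges B q := by
      simp only [extEdges, Finset.mem_insert]
      rcases hcase with h | h | h <;> subst h <;> tauto
    refine ⟨SimpleGraph.Walk.cons (ext_adj hmem hqx) SimpleGraph.Walk.nil, ?_, ?_⟩ <;>
    · rw [SimpleGraph.Walk.support_cons, SimpleGraph.Walk.support_nil]
      simp only [List.mem_cons, List.mem_singleton, List.not_mem_nil]
      push_neg
      refine ⟨fun h => ?_, fun h => ?_, ?_⟩ <;>
        first
          | exact hq1 h.symm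
          | exact hq2 h.symm
          | exact hx1 h.symm
          | exact hx2 h.symm
          | trivial
  intro n
  induction n with
  | zero =>
    intro x hx hr hx1 hx2
    by_cases h1 : x = B.r₁
    · exact hbase x hx (Or.inl h1) hx1 hx2
    by_cases h2 : x = B.r₂
    · exact hbase x hx (Or.inr (Or.inl h2)) hx1 hx2
    · exfalso; have := B.rank_lt₁ x hx h1 h2; omega
  | succ n ih =>
    intro x hx hr hx1 hx2
    by_cases h1 : x = B.r₁
    · exact hbase x hx (Or.inl h1) hx1 hx2
    by_cases h2 : x = B.r₂
    · exact hbase x hx (Or.inr (Or.inl h2)) hx1 hx2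
    by_cases hlf : x = B.lf
    · exact hbase x hx (Or.inr (Or.inr hlf)) hx1 hx2
    have hrk₁ := B.rank_lt₁ x hx h1 h2
    have hrk₂ := B.rank_lt₂ x hx h1 h2
    have hmem₁ : s(x, B.p₁ x) ∈ extEdges B q :=
      branch_subset_ext B q (B.mem_edges_iff.mpr (Or.inr ⟨x, hx, h1, h2, Or.inl rfl⟩))
    have hmem₂ : s(x, B.p₂ x) ∈ extEdges B q :=
      branch_subset_ext B q (B.mem_edges_iff.mpr (Or.inr ⟨x, hx, h1, h2, Or.inr rfl⟩))
    by_cases hp1 : B.p₁ x ≠ t₁ ∧ B.p₁ x ≠ t₂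
    · obtain ⟨w, hw1, hw2⟩ := ih (B.p₁ x) (B.parent₁_mem x hx h1 h2) (by omega) hp1.1 hp1.2
      have hadj : (extGraph B q).Adj (B.p₁ x) x := by
        refine ext_adj ?_ (fun h => B.self_ne_p₁ hx h1 h2 h.symm)
        rwa [Sym2.eq_swap]
      refine ⟨w.append (SimpleGraph.Walk.cons hadj SimpleGraph.Walk.nil), ?_, ?_⟩ <;>
      · rw [SimpleGraph.Walk.mem_support_append_iff]
        push_neg
        refine ⟨by assumption, ?_⟩
        rw [SimpleGraph.Walk.support_cons, SimpleGraph.Walk.support_nil]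
        simp only [List.mem_cons, List.mem_singleton, List.not_mem_nil]
        push_neg
        refine ⟨fun h => ?_, fun h => ?_, ?_⟩ <;>
          first
            | exact hp1.1 h.symm
            | exact hp1.2 h.symm
            | exact hx1 h.symm
            | exact hx2 h.symm
            | trivial
    by_cases hp2 : B.p₂ x ≠ t₁ ∧ B.p₂ x ≠ t₂
    · obtain ⟨w, hw1, hw2⟩ := ih (B.p₂ x) (B.parent₂_mem x hx h1 h2) (by omega) hp2.1 hp2.2
      have hadj : (extGraph B q).Adj (B.p₂ x) x := by
        refine ext_adj ?_ (fun h => B.self_ne_p₂ hx h1 h2 h.symm)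
        rwa [Sym2.eq_swap]
      refine ⟨w.append (SimpleGraph.Walk.cons hadj SimpleGraph.Walk.nil), ?_, ?_⟩ <;>
      · rw [SimpleGraph.Walk.mem_support_append_iff]
        push_neg
        refine ⟨by assumption, ?_⟩
        rw [SimpleGraph.Walk.support_cons, SimpleGraph.Walk.support_nil]
        simp only [List.mem_cons, List.mem_singleton, List.not_mem_nil]
        push_neg
        refine ⟨fun h => ?_, fun h => ?_, ?_⟩ <;>
          first
            | exact hp2.1 h.symm
            | exact hp2.2 h.symm
            | exact hx1 h.symm
            | exact hx2 h.symm
            | trivial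
    -- both parents are forbidden: ascend to the leaf
    · push_neg at hp1 hp2
      have hd := B.parents_ne x hx h1 h2
      have e₁ : B.p₁ x = t₁ ∨ B.p₁ x = t₂ := by tauto
      have e₂ : B.p₂ x = t₁ ∨ B.p₂ x = t₂ := by tauto
      have hrt : B.rank t₁ < B.rank x ∧ B.rank t₂ < B.rank x := by
        rcases e₁ with e₁ | e₁ <;> rcases e₂ with e₂ | e₂
        · exact absurd (e₁.trans e₂.symm) hd
        · exact ⟨e₁ ▸ hrk₁, e₂ ▸ hrk₂⟩
        · exact ⟨e₂ ▸ hrk₂, e₁ ▸ hrk₁⟩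
        · exact absurd (e₁.trans e₂.symm) hd
      obtain ⟨wa, hsup⟩ := ascend B q _ x hx h1 h2 le_rfl
      have hqlf : q ≠ B.lf := fun h => hq (h ▸ B.leaf_mem)
      have hmemlf : s(q, B.lf) ∈ extEdges B q := by
        simp only [extEdges, Finset.mem_insert]; tauto
      refine ⟨SimpleGraph.Walk.cons (ext_adj hmemlf hqlf) wa.reverse, ?_, ?_⟩ <;>
      · rw [SimpleGraph.Walk.support_cons]
        simp only [List.mem_cons, SimpleGraph.Walk.support_reverse, List.mem_reverse]
        push_neg
        constructor
        · first | exact fun h => hq1 h.symm | exact fun h => hq2 h.symm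
        · intro hmm
          obtain ⟨hz1, hz2⟩ := hsup _ hmm
          omega

/-- A graph (given by vertex and edge finsets) is an M-circuit:
`|E| = 2|V| - 2` and every proper vertex subset `X` with `|X| ≥ 2` induces at
most `2|X| - 3` edges. -/
def MCirc (V : Finset ℕ) (E : Finset (Sym2 ℕ)) : Prop :=
  ((E.card : ℤ) = 2 * V.card - 2) ∧
  ∀ X ⊂ V, 2 ≤ X.card → (((E ∩ X.sym2).card : ℤ)) ≤ 2 * X.card - 3

/-- A graph is 3-connected: more than 3 vertices, and after removing any two
vertices every pair of remaining vertices is joined by a walk avoiding them. -/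
def ThreeConn (V : Finset ℕ) (E : Finset (Sym2 ℕ)) : Prop :=
  3 < V.card ∧
  ∀ t₁ t₂ : ℕ, ∀ x ∈ V, ∀ y ∈ V, x ≠ t₁ → x ≠ t₂ → y ≠ t₁ → y ≠ t₂ →
    ∃ w : (SimpleGraph.fromEdgeSet (E : Set (Sym2 ℕ))).Walk x y,
      t₁ ∉ w.support ∧ t₂ ∉ w.support

lemma ext_threeConn (B : Branch) (q : ℕ) (hq : q ∉ B.verts) (h4 : 4 ≤ B.verts.card) :
    ThreeConn (extVerts B q) (extEdges B q) := by
  constructor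
  · rw [extVerts, Finset.card_insert_of_notMem hq]; omega
  · intro t₁ t₂ x hx y hy hx1 hx2 hy1 hy2
    change ∃ w : (extGraph B q).Walk x y, t₁ ∉ w.support ∧ t₂ ∉ w.support
    by_cases hqt : q ≠ t₁ ∧ q ≠ t₂
    · have key : ∀ z ∈ extVerts B q, z ≠ t₁ → z ≠ t₂ →
          ∃ w : (extGraph B q).Walk q z, t₁ ∉ w.support ∧ t₂ ∉ w.support := by
        intro z hz hz1 hz2
        rw [extVerts, Finset.mem_insert] at hz
        rcases hz with rfl | hz
        · refine ⟨SimpleGraph.Walk.nil, ?_, ?_⟩ <;>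
          · rw [SimpleGraph.Walk.support_nil, List.mem_singleton]
            first | exact fun h => hqt.1 h.symm | exact fun h => hqt.2 h.symm
        · exact reach_q B q t₁ t₂ hq hqt.1 hqt.2 (B.rank z) z hz le_rfl hz1 hz2
      obtain ⟨wx, hwx1, hwx2⟩ := key x hx hx1 hx2
      obtain ⟨wy, hwy1, hwy2⟩ := key y hy hy1 hy2
      refine ⟨wx.reverse.append wy, ?_, ?_⟩ <;>
      · rw [SimpleGraph.Walk.mem_support_append_iff, SimpleGraph.Walk.support_reverse,
          List.mem_reverse]
        push_neg
        exact ⟨by assumption, by assumption⟩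
    · -- q is one of the removed vertices; both x, y are in the branch
      have hxq : x ≠ q := by
        rintro rfl
        rcases not_and_or.mp hqt with h | h <;> push_neg at h
        · exact hx1 h
        · exact hx2 h
      have hyq : y ≠ q := by
        rintro rfl
        rcases not_and_or.mp hqt with h | h <;> push_neg at h
        · exact hy1 h
        · exact hy2 h
      have hxV : x ∈ B.verts := by
        rcases Finset.mem_insert.mp hx with h | h; exact absurd h hxq; exact h
      have hyV : y ∈ B.verts := by
        rcases Finset.mem_insert.mp hy with h | h; exact absurd h hyq; exact h
      obtain ⟨t, ht2, ht⟩ : ∃ t, (t = t₁ ∨ t = t₂) ∧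
          ∀ z, z ∈ B.verts → z ≠ t → z ≠ t₁ ∧ z ≠ t₂ := by
        rcases (em (q = t₁)) with h | h
        · exact ⟨t₂, Or.inr rfl, fun z hzv hzt =>
            ⟨fun hh => hq (by rw [h.trans hh.symm]; exact hzv), hzt⟩⟩
        · have h2 : q = t₂ := by tauto
          exact ⟨t₁, Or.inl rfl, fun z hzv hzt =>
            ⟨hzt, fun hh => hq (by rw [h2.trans hh.symm]; exact hzv)⟩⟩
      have hxt : x ≠ t := by rcases ht2 with rfl | rfl <;> assumption
      have hyt : y ≠ t := by rcases ht2 with rfl | rfl <;> assumption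
      obtain ⟨rx, wx, hrx, hsupx⟩ := descend B q t (B.rank x) x hxV le_rfl hxt
      obtain ⟨ry, wy, hry, hsupy⟩ := descend B q t (B.rank y) y hyV le_rfl hyt
      by_cases hrxy : rx = ry
      · subst hrxy
        refine ⟨wx.append wy.reverse, ?_, ?_⟩
        · intro hmem
          rw [SimpleGraph.Walk.mem_support_append_iff, SimpleGraph.Walk.support_reverse,
            List.mem_reverse] at hmem
          rcases hmem with h | h
          · exact (ht t₁ (hsupx t₁ h).1 (hsupx t₁ h).2).1 rfl
          · exact (ht t₁ (hsupy t₁ h).1 (hsupy t₁ h).2).1 rfl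
        · intro hmem
          rw [SimpleGraph.Walk.mem_support_append_iff, SimpleGraph.Walk.support_reverse,
            List.mem_reverse] at hmem
          rcases hmem with h | h
          · exact (ht t₂ (hsupx t₂ h).1 (hsupx t₂ h).2).2 rfl
          · exact (ht t₂ (hsupy t₂ h).1 (hsupy t₂ h).2).2 rfl
      · have hadj : (extGraph B q).Adj rx ry := by
          refine ext_adj ?_ hrxy
          rcases hrx with h | h <;> rcases hry with h' | h' <;> subst h <;> subst h'
          · exact absurd rfl hrxy
          · exact branch_subset_ext B q (B.mem_edges_iff.mpr (Or.inl rfl))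
          · rw [Sym2.eq_swap]
            exact branch_subset_ext B q (B.mem_edges_iff.mpr (Or.inl rfl))
          · exact absurd rfl hrxy
        refine ⟨wx.append (SimpleGraph.Walk.cons hadj wy.reverse), ?_, ?_⟩
        · intro hmem
          rw [SimpleGraph.Walk.mem_support_append_iff] at hmem
          rcases hmem with h | h
          · exact (ht t₁ (hsupx t₁ h).1 (hsupx t₁ h).2).1 rfl
          · rw [SimpleGraph.Walk.support_cons, List.mem_cons,
              SimpleGraph.Walk.support_reverse, List.mem_reverse] at h
            rcases h with h | h
            · have := hsupx rx (SimpleGraph.Walk.end_mem_support wx)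
              exact (ht rx this.1 this.2).1 h.symm
            · exact (ht t₁ (hsupy t₁ h).1 (hsupy t₁ h).2).1 rfl
        · intro hmem
          rw [SimpleGraph.Walk.mem_support_append_iff] at hmem
          rcases hmem with h | h
          · exact (ht t₂ (hsupx t₂ h).1 (hsupx t₂ h).2).2 rfl
          · rw [SimpleGraph.Walk.support_cons, List.mem_cons,
              SimpleGraph.Walk.support_reverse, List.mem_reverse] at h
            rcases h with h | h
            · have := hsupx rx (SimpleGraph.Walk.end_mem_support wx)
              exact (ht rx this.1 this.2).2 h.symm
            · exact (ht t₂ (hsupy t₂ h).1 (hsupy t₂ h).2).2 rfl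

lemma q_edge_not_branch (B : Branch) {q : ℕ} (hq : q ∉ B.verts) (a : ℕ) :
    s(q, a) ∉ B.edges := by
  intro h
  exact hq (B.edge_mem_verts h q (by rw [Sym2.mem_iff]; left; rfl))

lemma ext_edges_card (B : Branch) (q : ℕ) (hq : q ∉ B.verts) (h4 : 4 ≤ B.verts.card) :
    (extEdges B q).card = 2 * B.verts.card := by
  have hqr₁ : q ≠ B.r₁ := fun h => hq (h ▸ B.r₁_mem)
  have hqr₂ : q ≠ B.r₂ := fun h => hq (h ▸ B.r₂_mem)
  have h1 : s(q, B.lf) ∉ insert s(q, B.r₁) (insert s(q, B.r₂) B.edges) := by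
    simp only [Finset.mem_insert, Sym2.eq_iff]
    push_neg
    exact ⟨⟨fun _ => B.leaf_ne_r₁, fun h => absurd h hqr₁⟩,
      ⟨fun _ => B.leaf_ne_r₂, fun h => absurd h hqr₂⟩, q_edge_not_branch B hq _⟩
  have h2 : s(q, B.r₁) ∉ insert s(q, B.r₂) B.edges := by
    simp only [Finset.mem_insert, Sym2.eq_iff]
    push_neg
    exact ⟨⟨fun _ => B.root_ne, fun h => absurd h hqr₂⟩, q_edge_not_branch B hq _⟩
  have h3 : s(q, B.r₂) ∉ B.edges := q_edge_not_branch B hq _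
  rw [extEdges, Finset.card_insert_of_notMem h1, Finset.card_insert_of_notMem h2,
    Finset.card_insert_of_notMem h3, B.card_edges]
  omega

lemma branch_not_diag (B : Branch) : ∀ e ∈ B.edges, ¬ e.IsDiag := by
  intro e he
  rw [B.mem_edges_iff] at he
  rcases he with h | ⟨x, hx, h1, h2, (h | h)⟩ <;> subst h <;> rw [Sym2.mk_isDiag_iff]
  · exact B.root_ne
  · exact B.self_ne_p₁ hx h1 h2
  · exact B.self_ne_p₂ hx h1 h2

lemma ext_not_diag (B : Branch) (q : ℕ) (hq : q ∉ B.verts) :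
    ∀ e ∈ extEdges B q, ¬ e.IsDiag := by
  intro e he
  simp only [extEdges, Finset.mem_insert] at he
  rcases he with h | h | h | h
  · subst h; rw [Sym2.mk_isDiag_iff]; exact fun h => hq (h ▸ B.leaf_mem)
  · subst h; rw [Sym2.mk_isDiag_iff]; exact fun h => hq (h ▸ B.r₁_mem)
  · subst h; rw [Sym2.mk_isDiag_iff]; exact fun h => hq (h ▸ B.r₂_mem)
  · exact branch_not_diag B e h

lemma ext_mcirc (B : Branch) (q : ℕ) (hq : q ∉ B.verts) (h4 : 4 ≤ B.verts.card) :
    MCirc (extVerts B q) (extEdges B q) := by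
  constructor
  · rw [ext_edges_card B q hq h4, extVerts, Finset.card_insert_of_notMem hq]
    push_cast
    ring
  · intro X hX h2
    suffices h : (extEdges B q ∩ X.sym2).card + 3 ≤ 2 * X.card by
      omega
    by_cases hqX : q ∈ X
    · -- q ∈ X
      set Y := X.erase q with hYdef
      have hYV : Y ⊆ B.verts := by
        intro z hz
        rw [hYdef, Finset.mem_erase] at hz
        rcases Finset.mem_insert.mp (hX.subset hz.2) with h | h
        · exact absurd h hz.1
        · exact h
      have hYcard : Y.card + 1 = X.card := by
        rw [hYdef, Finset.card_erase_of_mem hqX]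
        have := Finset.card_pos.mpr ⟨q, hqX⟩
        omega
      by_cases hY2 : 2 ≤ Y.card
      · -- main case
        set qS := (({s(q, B.lf), s(q, B.r₁), s(q, B.r₂)} : Finset (Sym2 ℕ)).filter
          (· ∈ X.sym2)) with hqS
        have hsplit : extEdges B q ∩ X.sym2 ⊆ qS ∪ (B.edges ∩ Y.sym2) := by
          intro e he
          rw [Finset.mem_inter] at he
          obtain ⟨heE, heX⟩ := he
          simp only [extEdges, Finset.mem_insert] at heE
          rcases heE with h | h | h | h
          · exact Finset.mem_union_left _ (Finset.mem_filter.mpr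
              ⟨by simp [h], heX⟩)
          · exact Finset.mem_union_left _ (Finset.mem_filter.mpr
              ⟨by simp [h], heX⟩)
          · exact Finset.mem_union_left _ (Finset.mem_filter.mpr
              ⟨by simp [h], heX⟩)
          · refine Finset.mem_union_right _ (Finset.mem_inter.mpr ⟨h, ?_⟩)
            rw [Finset.mem_sym2_iff] at heX ⊢
            intro a ha
            refine Finset.mem_erase.mpr ⟨?_, heX a ha⟩
            exact fun hh => hq (hh ▸ B.edge_mem_verts h a ha)
        have hcard := (Finset.card_le_card hsplit).trans (Finset.card_union_le _ _)
        have hdrop : ∀ a, a ∈ B.verts → a ∉ Y → s(q, a) ∉ X.sym2 := by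
          intro a haV haY hmem
          rw [Finset.mk_mem_sym2_iff] at hmem
          exact haY (Finset.mem_erase.mpr ⟨fun h => hq (h ▸ haV), hmem.2⟩)
        have c1 := Finset.card_insert_le s(q, B.lf) ({s(q, B.r₁), s(q, B.r₂)} : Finset (Sym2 ℕ))
        have c2 := Finset.card_insert_le s(q, B.r₁) ({s(q, B.r₂)} : Finset (Sym2 ℕ))
        have c3 : ({s(q, B.r₂)} : Finset (Sym2 ℕ)).card = 1 := Finset.card_singleton _
        by_cases hall : B.lf ∈ Y ∧ B.r₁ ∈ Y ∧ B.r₂ ∈ Y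
        · -- all three neighbours of q present: use refined sparsity
          have hne : Y ≠ B.verts := by
            obtain ⟨z, hzV, hzX⟩ := Finset.exists_of_ssubset hX
            intro hcon
            rcases Finset.mem_insert.mp hzV with h | h
            · exact hzX (h ▸ hqX)
            · exact hzX (Finset.mem_of_mem_erase (hcon ▸ h : z ∈ Y))
          have hbr := B.sparse_refined hYV hne hall.2.1 hall.2.2 hall.1
          have hqS3 : qS.card ≤ 3 := by
            have := Finset.card_filter_le
              ({s(q, B.lf), s(q, B.r₁), s(q, B.r₂)} : Finset (Sym2 ℕ)) (· ∈ X.sym2)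
            rw [← hqS] at this
            omega
          omega
        · -- one neighbour missing: crude sparsity suffices
          obtain ⟨a, hat, hav, hay⟩ : ∃ a, s(q, a) ∈
              ({s(q, B.lf), s(q, B.r₁), s(q, B.r₂)} : Finset (Sym2 ℕ)) ∧
              a ∈ B.verts ∧ a ∉ Y := by
            rw [not_and_or, not_and_or] at hall
            rcases hall with h | h | h
            · exact ⟨B.lf, by simp, B.leaf_mem, h⟩
            · exact ⟨B.r₁, by simp, B.r₁_mem, h⟩
            · exact ⟨B.r₂, by simp, B.r₂_mem, h⟩
          have hqS2 : qS.card ≤ 2 := by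
            have hsub : qS ⊆ ({s(q, B.lf), s(q, B.r₁), s(q, B.r₂)} :
                Finset (Sym2 ℕ)).erase s(q, a) := by
              intro e he
              rw [hqS, Finset.mem_filter] at he
              refine Finset.mem_erase.mpr ⟨?_, he.1⟩
              intro hcon
              exact hdrop a hav hay (hcon ▸ he.2)
            have := Finset.card_le_card hsub
            rw [Finset.card_erase_of_mem hat] at this
            omega
          have hbr := B.sparse hYV hY2
          omega
      · -- |Y| = 1, i.e. |X| = 2
        have hY1 : Y.card = 1 := by omega
        obtain ⟨y, hy⟩ := Finset.card_eq_one.mp hY1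
        have hXeq : X = insert q {y} := by
          rw [← hy, hYdef, Finset.insert_erase hqX]
        have hsub : extEdges B q ∩ X.sym2 ⊆ {s(q, y)} := by
          intro e he
          rw [Finset.mem_inter] at he
          obtain ⟨heE, heX⟩ := he
          have hnd := ext_not_diag B q hq e heE
          induction e using Sym2.inductionOn with
          | hf a b =>
            rw [Finset.mk_mem_sym2_iff, hXeq] at heX
            simp only [Finset.mem_insert, Finset.mem_singleton] at heX
            rw [Sym2.mk_isDiag_iff] at hnd
            rw [Finset.mem_singleton]
            rcases heX.1 with h | h <;> rcases heX.2 with h' | h'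
            · exact absurd (h.trans h'.symm) hnd
            · rw [h, h']
            · rw [h, h', Sym2.eq_swap]
            · exact absurd (h.trans h'.symm) hnd
        have := (Finset.card_le_card hsub).trans (Finset.card_singleton s(q, y)).le
        omega
    · -- q ∉ X : X ⊆ B.verts, use crude sparsity
      have hXV : X ⊆ B.verts := by
        intro z hz
        rcases Finset.mem_insert.mp (hX.subset hz) with h | h
        · exact absurd (h ▸ hz) hqX
        · exact h
      have hsub : extEdges B q ∩ X.sym2 ⊆ B.edges ∩ X.sym2 := by
        intro e he
        rw [Finset.mem_inter] at he
        obtain ⟨heE, heX⟩ := he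
        simp only [extEdges, Finset.mem_insert] at heE
        rcases heE with h | h | h | h
        · exfalso; rw [h, Finset.mk_mem_sym2_iff] at heX; exact hqX heX.1
        · exfalso; rw [h, Finset.mk_mem_sym2_iff] at heX; exact hqX heX.1
        · exfalso; rw [h, Finset.mk_mem_sym2_iff] at heX; exact hqX heX.1
        · exact Finset.mem_inter.mpr ⟨h, heX⟩
      have := (Finset.card_le_card hsub).trans_eq rfl
      have hbr := B.sparse hXV h2
      omega

/-- assuming Hendrickson's criterion (every 3-connected M-circuit
is globally rigid), the graph obtained from a branch `B(v)` by adding a vertex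
`q` with edges to `v`, `r₁`, `r₂` is globally rigid. -/
theorem ext_graph_globally_rigid
    (GloballyRigid : Finset ℕ → Finset (Sym2 ℕ) → Prop)
    (hendrickson : ∀ (V : Finset ℕ) (E : Finset (Sym2 ℕ)),
      ThreeConn V E → MCirc V E → GloballyRigid V E)
    (B : Branch) (q : ℕ) (hq : q ∉ B.verts) (h4 : 4 ≤ B.verts.card) :
    GloballyRigid (extVerts B q) (extEdges B q) := by
  exact hendrickson _ _ (ext_threeConn B q hq h4) (ext_mcirc B q hq h4)
end
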